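/- arXiv:1403.0476 — 4 statements merged into one kernel-verified Lean document; each statement's English description precedes it below -/
import Mathlib

section
/- Let Γ be a valued constraint language on a finite set D, let f ∈ Pol₁⁺(Γ) be a unary operation in the positive clone of Γ, and let I be an instance of VCSP(Γ). If s is an optimal assignment for I, then the assignment f ∘ s is also optimal. -/
/-! Basic framework for Valued Constraint Satisfaction Problems (VCSP):
operations, clones, weightings, weighted clones, cost functions,
(weighted/fractional) polymorphisms, expressibility and weighted relational clones. -/

/-- A `k`-ary operation on `D`. -/
abbrev Op (D : Type) (k : ℕ) : Type := (Fin k → D) → D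

/-- The `i`-th `k`-ary projection on `D`. -/
def proj (D : Type) {k : ℕ} (i : Fin k) : Op D k := fun x => x i

/-- An operation is a projection. -/
def IsProj {D : Type} {k : ℕ} (f : Op D k) : Prop := ∃ i : Fin k, f = proj D i

/-- Superposition `f[g₁,…,g_k]` of a `k`-ary operation with `k` many `l`-ary operations. -/
def superposeOp {D : Type} {k l : ℕ} (f : Op D k) (g : Fin k → Op D l) : Op D l :=
  fun x => f fun i => g i x

/-- A clone of operations on `D`: contains all projections and is closed under superposition. -/
structure IsClone {D : Type} (C : ∀ k, Set (Op D k)) : Prop where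
  proj_mem : ∀ (k : ℕ) (i : Fin k), proj D i ∈ C k
  superpose_mem : ∀ (k l : ℕ) (f : Op D k) (g : Fin k → Op D l),
    f ∈ C k → (∀ i, g i ∈ C l) → superposeOp f g ∈ C l

/-- A `k`-ary weighting of the clone `C`: a rational-valued function on `k`-ary operations,
vanishing outside `C`, summing to `0`, and negative only on projections. -/
structure IsWeighting {D : Type} [Fintype D] [DecidableEq D] (C : ∀ k, Set (Op D k))
    {k : ℕ} (ω : Op D k → ℚ) : Prop where
  support_mem : ∀ f : Op D k, ω f ≠ 0 → f ∈ C k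
  sum_zero : ∑ f : Op D k, ω f = 0
  neg_imp_proj : ∀ f : Op D k, ω f < 0 → IsProj f

/-- Superposition of a `k`-ary weighting with `k` many `l`-ary operations. -/
def wSuperpose {D : Type} [Fintype D] [DecidableEq D] {k l : ℕ}
    (ω : Op D k → ℚ) (g : Fin k → Op D l) : Op D l → ℚ :=
  fun f' => ∑ f ∈ Finset.univ.filter (fun f : Op D k => superposeOp f g = f'), ω f

/-- A weighted clone over the clone `C`: a nonempty family of weightings of `C` closed under
non-negative scaling, addition of weightings of equal arity and proper superposition. -/
structure IsWeightedClone {D : Type} [Fintype D] [DecidableEq D]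
    (C : ∀ k, Set (Op D k)) (W : ∀ k, Set (Op D k → ℚ)) : Prop where
  clone : IsClone C
  weighting : ∀ (k : ℕ), ∀ ω ∈ W k, IsWeighting C ω
  nonempty : ∃ k, (W k).Nonempty
  scale_mem : ∀ (k : ℕ) (c : ℚ), 0 ≤ c → ∀ ω ∈ W k, (fun f => c * ω f) ∈ W k
  add_mem : ∀ (k : ℕ), ∀ ω₁ ∈ W k, ∀ ω₂ ∈ W k, (fun f => ω₁ f + ω₂ f) ∈ W k
  superpose_mem : ∀ (k l : ℕ), ∀ ω ∈ W k, ∀ g : Fin k → Op D l,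
    (∀ i, g i ∈ C l) → IsWeighting C (wSuperpose ω g) → wSuperpose ω g ∈ W l

/-- The positive clone of a family of weightings: all projections together with all operations
receiving positive weight from some weighting in the family. -/
def posClone {D : Type} [Fintype D] [DecidableEq D] (W : ∀ k, Set (Op D k → ℚ)) :
    ∀ k, Set (Op D k) :=
  fun k => {f | IsProj f ∨ ∃ ω ∈ W k, 0 < ω f}

/-- An `r`-ary cost function on `D`, with values in `ℚ ∪ {∞}`. -/
abbrev CostF (D : Type) (r : ℕ) : Type := (Fin r → D) → WithTop ℚ

/-- The feasibility relation of a cost function. -/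
def Feas {D : Type} {r : ℕ} (ϱ : CostF D r) : Set (Fin r → D) := {x | ϱ x ≠ ⊤}

/-- Coordinate-wise application of a `k`-ary operation to `k` many `r`-tuples. -/
def appRows {D : Type} {k r : ℕ} (f : Op D k) (xs : Fin k → Fin r → D) : Fin r → D :=
  fun j => f fun i => xs i j

/-- `f` is a polymorphism of `ϱ`: `Feas ϱ` is closed under coordinate-wise application of `f`. -/
def IsPolymorphism {D : Type} {k r : ℕ} (f : Op D k) (ϱ : CostF D r) : Prop :=
  ∀ xs : Fin k → Fin r → D, (∀ i, xs i ∈ Feas ϱ) → appRows f xs ∈ Feas ϱ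

/-- A valued constraint language on `D`: a set of cost functions of various arities. -/
abbrev VLang (D : Type) : Type := Set (Σ r : ℕ, CostF D r)

/-- The clone of polymorphisms of a language. -/
def Pol {D : Type} (Γ : VLang D) : ∀ k, Set (Op D k) :=
  fun _ => {f | ∀ ϱ ∈ Γ, IsPolymorphism f ϱ.2}

/-- Multiplication of an element of `ℚ ∪ {∞}` by a rational scalar (`c·∞ = ∞`). -/
def qmul (c : ℚ) (x : WithTop ℚ) : WithTop ℚ := WithTop.map (fun q => c * q) x

/-- The sum `∑_f ω(f)·ϱ(f(x₁,…,x_k))`, over operations with non-zero weight. -/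
def wSum {D : Type} [Fintype D] [DecidableEq D] {k r : ℕ}
    (ω : Op D k → ℚ) (ϱ : CostF D r) (xs : Fin k → Fin r → D) : WithTop ℚ :=
  ∑ f ∈ Finset.univ.filter (fun f : Op D k => ω f ≠ 0), qmul (ω f) (ϱ (appRows f xs))

/-- `ω` is a weighted polymorphism of the language `Γ`. -/
def IsWeightedPolymorphism {D : Type} [Fintype D] [DecidableEq D] (Γ : VLang D)
    {k : ℕ} (ω : Op D k → ℚ) : Prop :=
  IsWeighting (Pol Γ) ω ∧
    ∀ ϱ ∈ Γ, ∀ xs : Fin k → Fin ϱ.1 → D, (∀ i, xs i ∈ Feas ϱ.2) → wSum ω ϱ.2 xs ≤ 0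

/-- The weighted polymorphisms of a language. -/
def wPol {D : Type} [Fintype D] [DecidableEq D] (Γ : VLang D) :
    ∀ k, Set (Op D k → ℚ) :=
  fun _ => {ω | IsWeightedPolymorphism Γ ω}

/-- The positive clone `Pol⁺(Γ)` of a language. -/
def PolPlus {D : Type} [Fintype D] [DecidableEq D] (Γ : VLang D) : ∀ k, Set (Op D k) :=
  posClone (wPol Γ)

/-- The map `D → D` induced by a unary operation. -/
def unaryFun {D : Type} (f : Op D 1) : D → D := fun x => f fun _ => x

/-- A language is a core if every unary operation in its positive clone is bijective. -/
def IsCore {D : Type} [Fintype D] [DecidableEq D] (Γ : VLang D) : Prop :=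
  ∀ f ∈ PolPlus Γ 1, Function.Bijective (unaryFun f)

/-- An idempotent operation. -/
def Idem {D : Type} {k : ℕ} (f : Op D k) : Prop := ∀ x : D, (f fun _ => x) = x

/-- A cyclic operation: `f(x₁,…,x_k) = f(x₂,…,x_k,x₁)`. -/
def CyclicOp {D : Type} {k : ℕ} (f : Op D k) : Prop :=
  ∀ x : Fin k → D, f x = f (x ∘ ⇑(finRotate k))

/-- A conservative operation. -/
def Conservative {D : Type} {k : ℕ} (f : Op D k) : Prop :=
  ∀ x : Fin k → D, ∃ i, f x = x i

/-- A Taylor operation. -/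
def IsTaylor {D : Type} {k : ℕ} (t : Op D k) : Prop :=
  Idem t ∧ ∀ j : Fin k, ∃ a b : Fin k → Fin 2, a j = 0 ∧ b j = 1 ∧
    ∀ u : Fin 2 → D, (t fun i => u (a i)) = t fun i => u (b i)

/-- An instance of `VCSP(Γ)` with variable set `V`: a finite multiset of constraints,
each a tuple of variables together with a cost function from `Γ`. -/
structure VInstance (D : Type) (Γ : VLang D) (V : Type) where
  cons : Multiset (Σ r : ℕ, (Fin r → V) × CostF D r)
  mem_lang : ∀ c ∈ cons, (⟨c.1, c.2.2⟩ : Σ r : ℕ, CostF D r) ∈ Γ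

/-- The cost of an assignment for a VCSP instance. -/
def VInstance.cost {D V : Type} {Γ : VLang D} (I : VInstance D Γ V) (s : V → D) :
    WithTop ℚ :=
  (I.cons.map fun c => c.2.2 fun i => s (c.2.1 i)).sum

/-- A cost function is expressible over a language `Δ`. -/
def Expressible {D : Type} [Fintype D] [DecidableEq D] (Δ : VLang D) {r : ℕ}
    (ϱ : CostF D r) : Prop :=
  ∃ (n : ℕ) (I : VInstance D Δ (Fin n)) (v : Fin r → Fin n),
    ∀ x : Fin r → D,
      ϱ x = (Finset.univ.filter fun s : Fin n → D => ∀ i, s (v i) = x i).inf fun s => I.cost s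

/-- A language is closed under expressibility, non-negative scaling and
addition of rational constants. -/
def IsWClosed {D : Type} [Fintype D] [DecidableEq D] (Δ : VLang D) : Prop :=
  (∀ (r : ℕ) (ϱ : CostF D r), Expressible Δ ϱ → (⟨r, ϱ⟩ : Σ r : ℕ, CostF D r) ∈ Δ) ∧
  (∀ (r : ℕ) (ϱ : CostF D r) (c : ℚ), 0 ≤ c → (⟨r, ϱ⟩ : Σ r : ℕ, CostF D r) ∈ Δ →
    (⟨r, fun x => qmul c (ϱ x)⟩ : Σ r : ℕ, CostF D r) ∈ Δ) ∧
  (∀ (r : ℕ) (ϱ : CostF D r) (c : ℚ), (⟨r, ϱ⟩ : Σ r : ℕ, CostF D r) ∈ Δ →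
    (⟨r, fun x => ϱ x + (c : WithTop ℚ)⟩ : Σ r : ℕ, CostF D r) ∈ Δ)

/-- The weighted relational clone generated by `Γ`: the smallest language containing `Γ`
closed under expressibility, non-negative scaling and addition of rational constants. -/
def wRelClo {D : Type} [Fintype D] [DecidableEq D] (Γ : VLang D) : VLang D :=
  ⋂₀ {Δ : VLang D | Γ ⊆ Δ ∧ IsWClosed Δ}

/-- The weighting `(1/k)(∑_i 1_{f_i} − ∑_i 1_{π_i})` associated with a `k`-tuple of
`k`-ary operations (a multimorphism), weights added with multiplicity. -/
def multimorphismW {D : Type} [Fintype D] [DecidableEq D] {k : ℕ} (F : Fin k → Op D k) :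
    Op D k → ℚ :=
  fun g => (1 / (k : ℚ)) *
    (((Finset.univ.filter fun i : Fin k => F i = g).card : ℚ) -
     ((Finset.univ.filter fun i : Fin k => proj D i = g).card : ℚ))

/-- `Γ` admits the multimorphism `⟨F 0, …, F (k-1)⟩`. -/
def AdmitsMultimorphism {D : Type} [Fintype D] [DecidableEq D] {k : ℕ}
    (Γ : VLang D) (F : Fin k → Op D k) : Prop :=
  multimorphismW F ∈ wPol Γ k

/-- An `m`-ary fractional operation: a probability distribution on `m`-ary operations. -/
def IsFracOp {D : Type} [Fintype D] [DecidableEq D] {m : ℕ} (ω : Op D m → ℝ) : Prop :=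
  (∀ f, 0 ≤ ω f) ∧ ∑ f : Op D m, ω f = 1

/-- Multiplication of an element of `ℚ ∪ {∞}` by a real scalar, landing in `ℝ ∪ {∞}`. -/
def rmul (c : ℝ) (x : WithTop ℚ) : WithTop ℝ := WithTop.map (fun q : ℚ => c * (q : ℝ)) x

/-- `ω` is a fractional polymorphism of the language `Γ`. -/
def IsFracPolymorphism {D : Type} [Fintype D] [DecidableEq D] (Γ : VLang D) {m : ℕ}
    (ω : Op D m → ℝ) : Prop :=
  IsFracOp ω ∧ ∀ ϱ ∈ Γ, ∀ xs : Fin m → Fin ϱ.1 → D, (∀ i, xs i ∈ Feas ϱ.2) →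
    (∑ g ∈ Finset.univ.filter fun g : Op D m => 0 < ω g, rmul (ω g) (ϱ.2 (appRows g xs)))
      ≤ rmul (1 / (m : ℝ)) (∑ i : Fin m, ϱ.2 (xs i))

/-- The positive clone `fPol⁺(Γ)` defined via fractional polymorphisms. -/
def fPolPlus {D : Type} [Fintype D] [DecidableEq D] (Γ : VLang D) : ∀ k, Set (Op D k) :=
  fun k => {f | IsProj f ∨ ∃ ω : Op D k → ℝ, IsFracPolymorphism Γ ω ∧ 0 < ω f}

/-- Application of a binary operation to two elements. -/
def ap2 {D : Type} (f : Op D 2) (a b : D) : D := f ![a, b]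

/-- Application of a ternary operation to three elements. -/
def ap3 {D : Type} (f : Op D 3) (a b c : D) : D := f ![a, b, c]

/-- A ternary operation restricts to a majority operation on a subset `S`. -/
def IsMajorityOn {D : Type} (f : Op D 3) (S : Set D) : Prop :=
  ∀ x ∈ S, ∀ y ∈ S, ap3 f x x y = x ∧ ap3 f x y x = x ∧ ap3 f y x x = x

/-- A ternary operation restricts to a minority operation on a subset `S`. -/
def IsMinorityOn {D : Type} (f : Op D 3) (S : Set D) : Prop :=
  ∀ x ∈ S, ∀ y ∈ S, ap3 f x x y = y ∧ ap3 f x y x = y ∧ ap3 f y x x = y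

/-- The language `Γ_c`: `Γ` together with all unary cost functions `N_a`
(`N_a(a) = 0`, `N_a(x) = ∞` for `x ≠ a`). -/
def withConstants {D : Type} [DecidableEq D] (Γ : VLang D) : VLang D :=
  Γ ∪ {p : Σ r : ℕ, CostF D r |
        ∃ a : D, p = ⟨1, fun x => if x 0 = a then (0 : WithTop ℚ) else ⊤⟩}

/-- A language is conservative if it contains every `{0,1}`-valued unary cost function. -/
def ConservativeLang {D : Type} (Γ : VLang D) : Prop :=
  ∀ ϱ : CostF D 1, (∀ x, ϱ x = 0 ∨ ϱ x = 1) → (⟨1, ϱ⟩ : Σ r : ℕ, CostF D r) ∈ Γ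

/-- The coordinate-wise action of a `k`-ary operation on `A` on the power `A^n`. -/
def opPow {A : Type} (n : ℕ) {k : ℕ} (f : Op A k) : Op (Fin n → A) k :=
  fun xs c => f fun i => xs i c

/-- Regrouping an `(n·r)`-tuple over `A` into an `r`-tuple of elements of `A^n`. -/
def regroup (A : Type) (n r : ℕ) (y : Fin (n * r) → A) : Fin r → Fin n → A :=
  fun j c => y (finProdFinEquiv (c, j))

private lemma msum_ne_top {m : Multiset (WithTop ℚ)} (h : m.sum ≠ ⊤) :
    ∀ a ∈ m, a ≠ ⊤ := by
  intro a ha hat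
  exact h (by rw [← Multiset.cons_erase ha, Multiset.sum_cons, hat, top_add])

private lemma msum_untop {m : Multiset (WithTop ℚ)} (h : ∀ a ∈ m, a ≠ ⊤) :
    m.sum = (((m.map (WithTop.untopD 0)).sum : ℚ) : WithTop ℚ) := by
  induction m using Multiset.induction_on with
  | empty => simp
  | cons a m ih =>
    have ha := h a (Multiset.mem_cons_self a m)
    lift a to ℚ using ha
    rw [Multiset.sum_cons, Multiset.map_cons, Multiset.sum_cons,
      ih (fun b hb => h b (Multiset.mem_cons_of_mem hb))]
    push_cast
    simp

private lemma msum_fsum {α β : Type} (m : Multiset α) (S : Finset β)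
    (h : β → α → ℚ) :
    (m.map (fun c => ∑ g ∈ S, h g c)).sum = ∑ g ∈ S, (m.map (fun c => h g c)).sum := by
  induction m using Multiset.induction_on with
  | empty => simp
  | cons a m ih => simp [ih, Finset.sum_add_distrib]

private lemma msum_nonpos {m : Multiset ℚ} (h : ∀ a ∈ m, a ≤ 0) : m.sum ≤ 0 := by
  induction m using Multiset.induction_on with
  | empty => simp
  | cons a m ih =>
    rw [Multiset.sum_cons]
    have h1 := h a (Multiset.mem_cons_self a m)
    have h2 := ih (fun b hb => h b (Multiset.mem_cons_of_mem hb))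
    linarith

private lemma qmul_ne_top {c : ℚ} {x : WithTop ℚ} (h : x ≠ ⊤) :
    qmul c x = ((c * WithTop.untopD 0 x : ℚ) : WithTop ℚ) := by
  lift x to ℚ using h
  rfl

/-- If `f ∈ Pol₁⁺(Γ)` and `s` is an optimal assignment of a VCSP(Γ)
instance, then `f ∘ s` is also optimal. -/
theorem optimal_comp_pos_unary {D : Type} [Fintype D] [DecidableEq D] [Nonempty D]
    (Γ : VLang D) (f : Op D 1) (hf : f ∈ PolPlus Γ 1)
    {V : Type} [Fintype V] (I : VInstance D Γ V) (s : V → D)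
    (hs : ∀ s' : V → D, I.cost s ≤ I.cost s') :
    ∀ s' : V → D, I.cost (fun v => unaryFun f (s v)) ≤ I.cost s' := by
  intro s'
  rcases hf with hproj | ⟨ω, hω, hωf⟩
  · obtain ⟨i, rfl⟩ := hproj
    exact hs s'
  by_cases htop : I.cost s = ⊤
  · have h := hs s'
    rw [htop, top_le_iff] at h
    rw [h]
    exact le_top
  obtain ⟨hW, hineq⟩ := hω
  classical
  set S := Finset.univ.filter (fun g : Op D 1 => ω g ≠ 0) with hS
  set Q : Op D 1 → ℚ := fun g =>
    (I.cons.map (fun c => WithTop.untopD 0 (c.2.2 fun i => unaryFun g (s (c.2.1 i))))).sum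
    with hQ
  set Q0 : ℚ :=
    (I.cons.map (fun c => WithTop.untopD 0 (c.2.2 fun i => s (c.2.1 i)))).sum with hQ0
  have hfin0 : ∀ c ∈ I.cons, c.2.2 (fun i => s (c.2.1 i)) ≠ ⊤ := by
    intro c hc
    exact msum_ne_top htop _ (Multiset.mem_map_of_mem _ hc)
  have hfin : ∀ g ∈ S, ∀ c ∈ I.cons,
      c.2.2 (fun i => unaryFun g (s (c.2.1 i))) ≠ ⊤ := by
    intro g hg c hc
    have hgne : ω g ≠ 0 := (Finset.mem_filter.mp hg).2
    rcases lt_or_gt_of_ne hgne with hneg | _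
    · obtain ⟨i, rfl⟩ := hW.neg_imp_proj g hneg
      exact hfin0 c hc
    · have hpol := hW.support_mem g hgne ⟨c.1, c.2.2⟩ (I.mem_lang c hc)
      exact hpol (fun _ j => s (c.2.1 j)) (fun _ => hfin0 c hc)
  have hcostg : ∀ g ∈ S, I.cost (fun v => unaryFun g (s v)) = (Q g : WithTop ℚ) := by
    intro g hg
    rw [VInstance.cost, msum_untop, Multiset.map_map]
    · rfl
    · intro a ha
      obtain ⟨c, hc, rfl⟩ := Multiset.mem_map.mp ha
      exact hfin g hg c hc
  have hcost0 : I.cost s = (Q0 : WithTop ℚ) := by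
    rw [VInstance.cost, msum_untop, Multiset.map_map]
    · rfl
    · intro a ha
      obtain ⟨c, hc, rfl⟩ := Multiset.mem_map.mp ha
      exact hfin0 c hc
  have hcQ : ∀ c ∈ I.cons,
      ∑ g ∈ S, ω g * WithTop.untopD 0 (c.2.2 fun i => unaryFun g (s (c.2.1 i))) ≤ 0 := by
    intro c hc
    have h1 := hineq ⟨c.1, c.2.2⟩ (I.mem_lang c hc) (fun _ j => s (c.2.1 j))
      (fun _ => hfin0 c hc)
    rw [wSum] at h1
    have h2 : ∑ g ∈ Finset.univ.filter (fun g : Op D 1 => ω g ≠ 0),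
        qmul (ω g) ((⟨c.1, c.2.2⟩ : Σ r : ℕ, CostF D r).2
          (appRows g (fun _ j => s (c.2.1 j))))
        = ((∑ g ∈ S, ω g * WithTop.untopD 0
            (c.2.2 fun i => unaryFun g (s (c.2.1 i)))) : ℚ) := by
      rw [hS]
      push_cast
      refine Finset.sum_congr rfl ?_
      intro g hg
      exact qmul_ne_top (hfin g (by rw [hS]; exact hg) c hc)
    rw [h2] at h1
    exact_mod_cast h1
  have hQsum : ∑ g ∈ S, ω g * Q g ≤ 0 := by
    have hswap : ∑ g ∈ S, ω g * Q g
        = (I.cons.map (fun c => ∑ g ∈ S,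
            ω g * WithTop.untopD 0 (c.2.2 fun i => unaryFun g (s (c.2.1 i))))).sum := by
      rw [msum_fsum]
      refine Finset.sum_congr rfl ?_
      intro g _
      rw [hQ]
      simp [Multiset.sum_map_mul_left]
    rw [hswap]
    refine msum_nonpos ?_
    intro a ha
    obtain ⟨c, hc, rfl⟩ := Multiset.mem_map.mp ha
    exact hcQ c hc
  have hzero : ∑ g ∈ S, ω g = 0 := by
    rw [hS, Finset.sum_filter_ne_zero]
    exact hW.sum_zero
  have hQle : ∀ g ∈ S, Q0 ≤ Q g := by
    intro g hg
    have h := hs (fun v => unaryFun g (s v))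
    rw [hcost0, hcostg g hg] at h
    exact_mod_cast h
  have hprojQ : ∀ g : Op D 1, IsProj g → Q g = Q0 := by
    rintro g ⟨i, rfl⟩
    rw [hQ, hQ0]
    rfl
  have hterm : ∀ g ∈ S, 0 ≤ ω g * (Q g - Q0) := by
    intro g hg
    rcases lt_or_ge (ω g) 0 with hneg | hpos
    · rw [hprojQ g (hW.neg_imp_proj g hneg)]
      simp
    · exact mul_nonneg hpos (by linarith [hQle g hg])
  have hsum0 : ∑ g ∈ S, ω g * (Q g - Q0) = 0 := by
    have hle : ∑ g ∈ S, ω g * (Q g - Q0) ≤ 0 := by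
      have heq : ∑ g ∈ S, ω g * (Q g - Q0)
          = ∑ g ∈ S, ω g * Q g - (∑ g ∈ S, ω g) * Q0 := by
        rw [Finset.sum_mul, ← Finset.sum_sub_distrib]
        refine Finset.sum_congr rfl ?_
        intro g _
        ring
      rw [heq, hzero]
      linarith
    exact le_antisymm hle (Finset.sum_nonneg hterm)
  have hfS : f ∈ S := by
    rw [hS]
    exact Finset.mem_filter.mpr ⟨Finset.mem_univ f, ne_of_gt hωf⟩
  have hfQ : Q f = Q0 := by
    have h := (Finset.sum_eq_zero_iff_of_nonneg hterm).mp hsum0 f hfS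
    rcases mul_eq_zero.mp h with h' | h'
    · exact absurd h' (ne_of_gt hωf)
    · linarith
  rw [hcostg f hfS, hfQ, ← hcost0]
  exact hs s'
end

section
/- Let Γ be a core valued constraint language on a finite set D. A unary weighting ω of the clone Pol(Γ) is a weighted polymorphism of Γ if and only if ω assigns positive weight only to operations f ∈ Pol₁(Γ) that are bijective and satisfy ϱ ∘ f = ϱ (f applied coordinate-wise) for every cost function ϱ ∈ Γ. -/
section AuxUnaryWP

/-- On a finite type, a bijection has a positive iterate equal to the identity. -/
lemma bij_iterate_id {α : Type*} [Fintype α] [DecidableEq α] {h : α → α}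
    (hb : Function.Bijective h) : ∃ n, 0 < n ∧ h^[n] = id := by
  let e : Equiv.Perm α := Equiv.ofBijective h hb
  refine ⟨orderOf e, orderOf_pos e, ?_⟩
  have h1 : e ^ orderOf e = 1 := pow_orderOf_eq_one e
  have h2 : ⇑(e ^ orderOf e) = h^[orderOf e] := Equiv.Perm.coe_pow e _
  rw [← h2, h1]; rfl

end AuxUnaryWP

/-- For a core language `Γ`, a unary weighting of `Pol(Γ)` is a weighted
polymorphism of `Γ` iff it assigns positive weight only to bijective operations
`f ∈ Pol₁(Γ)` satisfying `ϱ ∘ f = ϱ` for all `ϱ ∈ Γ`. -/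
theorem unary_weighted_polymorphism_iff {D : Type} [Fintype D] [DecidableEq D] [Nonempty D]
    (Γ : VLang D) (hcore : IsCore Γ) (ω : Op D 1 → ℚ)
    (hω : IsWeighting (Pol Γ) ω) :
    ω ∈ wPol Γ 1 ↔
      ∀ f : Op D 1, 0 < ω f →
        f ∈ Pol Γ 1 ∧ Function.Bijective (unaryFun f) ∧
          ∀ ϱ ∈ Γ, ∀ x : Fin ϱ.1 → D, ϱ.2 (fun j => unaryFun f (x j)) = ϱ.2 x := by
  constructor
  · -- forward direction
    intro hmem f hf
    have hfPol : f ∈ Pol Γ 1 := hω.support_mem f hf.ne'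
    have hsuppBij : ∀ g : Op D 1, 0 < ω g → Function.Bijective (unaryFun g) := by
      intro g hg
      exact hcore g (Or.inr ⟨ω, hmem, hg⟩)
    have hsuppPol : ∀ g : Op D 1, 0 < ω g → g ∈ Pol Γ 1 := by
      intro g hg; exact hω.support_mem g hg.ne'
    refine ⟨hfPol, hsuppBij f hf, ?_⟩
    rintro ⟨r, ϱ⟩ hρ x
    show ϱ (fun j => unaryFun f (x j)) = ϱ x
    -- setup: coordinatewise action and reachability
    set T : Op D 1 → (Fin r → D) → (Fin r → D) := fun g y j => unaryFun g (y j) with hT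
    have hTbij : ∀ g : Op D 1, 0 < ω g → Function.Bijective (T g) := by
      intro g hg
      have hE : T g = ⇑(Equiv.piCongrRight
          (fun _ : Fin r => Equiv.ofBijective (unaryFun g) (hsuppBij g hg))) := by
        funext y j; rfl
      rw [hE]; exact (Equiv.piCongrRight _).bijective
    set Step : (Fin r → D) → (Fin r → D) → Prop :=
      fun y z => ∃ g : Op D 1, 0 < ω g ∧ z = T g y with hStep
    set Reach := Relation.ReflTransGen Step with hReach
    have hStepRev : ∀ y z, Step y z → Reach z y := by
      rintro y z ⟨g, hg, rfl⟩
      obtain ⟨n, hn, hid⟩ := bij_iterate_id (hTbij g hg)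
      have hreach : ∀ (m : ℕ) (w : Fin r → D), Reach w ((T g)^[m] w) := by
        intro m
        induction m with
        | zero => intro w; exact Relation.ReflTransGen.refl
        | succ m ih =>
          intro w
          rw [Function.iterate_succ_apply']
          exact (ih w).tail ⟨g, hg, rfl⟩
      have hkey : (T g)^[n - 1] (T g y) = y := by
        have hsucc : (n - 1) + 1 = n := Nat.succ_pred_eq_of_pos hn
        calc (T g)^[n - 1] (T g y) = (T g)^[(n - 1) + 1] y :=
              (Function.iterate_succ_apply _ _ _).symm
          _ = y := by rw [hsucc, hid]; rfl
      have := hreach (n - 1) (T g y)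
      rwa [hkey] at this
    have hReachSymm : ∀ y z, Reach y z → Reach z y := by
      intro y z h
      induction h with
      | refl => exact Relation.ReflTransGen.refl
      | tail hab hbc ih => exact Relation.ReflTransGen.trans (hStepRev _ _ hbc) ih
    have hFeasStep : ∀ g : Op D 1, 0 < ω g → ∀ y : Fin r → D, ϱ y ≠ ⊤ → ϱ (T g y) ≠ ⊤ := by
      intro g hg y hy
      have := hsuppPol g hg ⟨r, ϱ⟩ hρ (fun _ => y) (fun _ => hy)
      exact this
    have hFeasReach : ∀ y z, Reach y z → ϱ y ≠ ⊤ → ϱ z ≠ ⊤ := by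
      intro y z h
      induction h with
      | refl => exact fun hy => hy
      | tail hab hbc ih =>
        intro hy
        obtain ⟨g, hg, rfl⟩ := hbc
        exact hFeasStep g hg _ (ih hy)
    by_cases hx : ϱ x = ⊤
    · -- infeasible case
      show ϱ (T f x) = ϱ x
      rw [hx]
      by_contra h
      have hfx : ϱ (T f x) ≠ ⊤ := h
      have : Reach (T f x) x := hStepRev x (T f x) ⟨f, hf, rfl⟩
      exact (hFeasReach (T f x) x this hfx) hx
    · -- feasible case
      have hOfin : Set.Finite {z : Fin r → D | Reach x z} := Set.toFinite _
      have hOne : Set.Nonempty {z : Fin r → D | Reach x z} :=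
        ⟨x, Relation.ReflTransGen.refl⟩
      obtain ⟨z₀, hz₀O, hz₀min⟩ := Set.exists_min_image _ ϱ hOfin hOne
      have hz₀O' : Reach x z₀ := hz₀O
      -- key step: at any minimizer, applying any support operation preserves the value
      have hkey : ∀ z : Fin r → D, Reach x z → ϱ z = ϱ z₀ →
          ∀ g : Op D 1, 0 < ω g → ϱ (T g z) = ϱ z₀ := by
        intro z hzO hz g hg
        have hzf : ϱ z ≠ ⊤ := hFeasReach x z hzO hx
        obtain ⟨m, hm⟩ := WithTop.ne_top_iff_exists.mp hzf
        have hineq := hmem.2 ⟨r, ϱ⟩ hρ (fun _ => z) (fun _ => hzf)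
        set s : Finset (Op D 1) := Finset.univ.filter (fun g : Op D 1 => ω g ≠ 0) with hs
        -- each term of the sum is finite
        have hTz : ∀ h : Op D 1, ω h ≠ 0 → ω h < 0 → T h z = z := by
          intro h hh hneg
          obtain ⟨i, rfl⟩ := hω.neg_imp_proj h hneg
          funext j; rfl
        have hne : ∀ h ∈ s, ϱ (T h z) ≠ ⊤ := by
          intro h hhs
          have hh : ω h ≠ 0 := by
            simp only [hs, Finset.mem_filter] at hhs; exact hhs.2
          rcases hh.lt_or_gt with hneg | hpos
          · rw [hTz h hh hneg]; exact hzf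
          · exact hFeasStep h hpos z hzf
        set c : Op D 1 → ℚ := fun h => WithTop.untopD 0 (ϱ (T h z)) with hc
        have hcval : ∀ h ∈ s, ϱ (T h z) = ↑(c h) := by
          intro h hhs
          obtain ⟨a, ha⟩ := WithTop.ne_top_iff_exists.mp (hne h hhs)
          simp only [hc]
          rw [← ha, WithTop.untopD_coe]
        have happ : ∀ h : Op D 1, appRows h (fun _ => z) = T h z := by
          intro h; funext j; rfl
        -- rewrite the weighted sum
        have hw : wSum ω ϱ (fun _ => z) = ↑(∑ h ∈ s, ω h * c h) := by
          rw [wSum]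
          rw [Finset.sum_congr rfl (fun h hhs => ?_)]
          · push_cast; rfl
          · rw [happ h, hcval h hhs]; rfl
        rw [hw] at hineq
        have hineq' : ∑ h ∈ s, ω h * c h ≤ 0 := by exact_mod_cast hineq
        have hsum0 : ∑ h ∈ s, ω h = 0 := by
          rw [hs, Finset.sum_filter_ne_zero]; exact hω.sum_zero
        have hge : ∀ h ∈ s, 0 < ω h → m ≤ c h := by
          intro h hhs hpos
          have hmem2 : Reach x (T h z) := hzO.tail ⟨h, hpos, rfl⟩
          have := hz₀min (T h z) hmem2
          rw [← hz, ← hm, hcval h hhs] at this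
          exact_mod_cast this
        have hceq : ∀ h ∈ s, ω h < 0 → c h = m := by
          intro h hhs hneg
          have hh : ω h ≠ 0 := by
            simp only [hs, Finset.mem_filter] at hhs; exact hhs.2
          have := hcval h hhs
          rw [hTz h hh hneg, ← hm] at this
          exact_mod_cast this.symm
        have hnonneg : ∀ h ∈ s, 0 ≤ ω h * (c h - m) := by
          intro h hhs
          have hh : ω h ≠ 0 := by
            simp only [hs, Finset.mem_filter] at hhs; exact hhs.2
          rcases hh.lt_or_gt with hneg | hpos
          · rw [hceq h hhs hneg]; simp
          · exact mul_nonneg hpos.le (by linarith [hge h hhs hpos])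
        have hsle : ∑ h ∈ s, ω h * (c h - m) ≤ 0 := by
          have : ∑ h ∈ s, ω h * (c h - m) = ∑ h ∈ s, ω h * c h - (∑ h ∈ s, ω h) * m := by
            rw [Finset.sum_mul, ← Finset.sum_sub_distrib]
            exact Finset.sum_congr rfl (fun h _ => by ring)
          rw [this, hsum0]; linarith
        have hall0 : ∀ h ∈ s, ω h * (c h - m) = 0 := by
          have hsum_eq : ∑ h ∈ s, ω h * (c h - m) = 0 :=
            le_antisymm hsle (Finset.sum_nonneg hnonneg)
          intro h hhs
          exact (Finset.sum_eq_zero_iff_of_nonneg hnonneg).mp hsum_eq h hhs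
        have hgs : g ∈ s := by
          simp only [hs, Finset.mem_filter]; exact ⟨Finset.mem_univ g, hg.ne'⟩
        have : c g = m := by
          have := hall0 g hgs
          rcases mul_eq_zero.mp this with h1 | h2
          · exact absurd h1 hg.ne'
          · linarith
        rw [hcval g hgs, this, hm]; exact hz
      -- propagate equality back to x along the reverse path
      have hinv : ∀ w, Relation.ReflTransGen Step z₀ w → Reach x w ∧ ϱ w = ϱ z₀ := by
        intro w hw
        induction hw with
        | refl => exact ⟨hz₀O', rfl⟩
        | tail hab hbc ih =>
          obtain ⟨g, hg, rfl⟩ := hbc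
          exact ⟨ih.1.tail ⟨g, hg, rfl⟩, hkey _ ih.1 ih.2 g hg⟩
      have hxeq : ϱ x = ϱ z₀ := (hinv x (hReachSymm x z₀ hz₀O')).2
      have hfin : ϱ (T f x) = ϱ z₀ := hkey x Relation.ReflTransGen.refl hxeq f hf
      show ϱ (T f x) = ϱ x
      rw [hfin, ← hxeq]
  · -- backward direction
    intro H
    refine ⟨hω, ?_⟩
    rintro ⟨r, ϱ⟩ hρ xs hfeas
    have hx0 : ϱ (xs 0) ≠ ⊤ := hfeas 0
    obtain ⟨q, hq⟩ := WithTop.ne_top_iff_exists.mp hx0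
    have happ : ∀ g : Op D 1, ω g ≠ 0 → ϱ (appRows g xs) = ϱ (xs 0) := by
      intro g hg
      rcases hg.lt_or_gt with hneg | hpos
      · obtain ⟨i, rfl⟩ := hω.neg_imp_proj g hneg
        have : appRows (proj D i) xs = xs i := by funext j; rfl
        rw [this, Subsingleton.elim i 0]
      · have hform : appRows g xs = fun j => unaryFun g (xs 0 j) := by
          funext j
          show g (fun i => xs i j) = g (fun _ => xs 0 j)
          congr 1
          funext i
          rw [Subsingleton.elim i 0]
        rw [hform]
        exact (H g hpos).2.2 ⟨r, ϱ⟩ hρ (xs 0)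
    have hcomp : wSum ω ϱ xs = ((∑ g ∈ Finset.univ.filter (fun g : Op D 1 => ω g ≠ 0),
        ω g * q : ℚ) : WithTop ℚ) := by
      rw [wSum]
      rw [Finset.sum_congr rfl (fun g hgs => ?_)]
      · push_cast; rfl
      · have hg : ω g ≠ 0 := (Finset.mem_filter.mp hgs).2
        rw [happ g hg, ← hq]; rfl
    rw [hcomp, ← Finset.sum_mul, Finset.sum_filter_ne_zero, hω.sum_zero, zero_mul]
    exact le_refl _
end

section
/- Let Γ be a finite core valued constraint language over a finite set D, and fix for each m an enumeration of D^m so that every m-ary operation on D is identified with a |D^m|-tuple over D. For every m there exists a cost function ϱ of arity |D^m| (viewed as ϱ : O_D^(m) → ℚ ∪ {∞}) belonging to wRelClo(Γ), and a rational number P, such that for every m-ary operation f on D: (1) ϱ(f) ≥ P; (2) ϱ(f) < ∞ if and only if f ∈ Pol_m(Γ); (3) ϱ(f) = P if and only if f ∈ Pol⁺(Γ). -/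
section Farkas
set_option linter.unusedSectionVars false

variable {α : Type} [Fintype α]

/-- Inner product of two vectors in `α → ℚ`. -/
def ip (v x : α → ℚ) : ℚ := ∑ i, v i * x i

lemma ip_smul_left (c : ℚ) (v x : α → ℚ) : ip (c • v) x = c * ip v x := by
  simp [ip, Finset.mul_sum, mul_assoc]

lemma ip_sub_left (v w x : α → ℚ) : ip (v - w) x = ip v x - ip w x := by
  simp [ip, sub_mul, Finset.sum_sub_distrib]

lemma ip_add_left (v w x : α → ℚ) : ip (v + w) x = ip v x + ip w x := by
  simp [ip, add_mul, Finset.sum_add_distrib]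

lemma ip_sub_right (v x y : α → ℚ) : ip v (x - y) = ip v x - ip v y := by
  simp [ip, mul_sub, Finset.sum_sub_distrib]

lemma ip_smul_right (c : ℚ) (v x : α → ℚ) : ip v (c • x) = c * ip v x := by
  simp [ip, Finset.mul_sum]; exact Finset.sum_congr rfl fun i _ => by ring

lemma ip_sum_left {κ : Type} (s : Finset κ) (A : κ → α → ℚ) (x : α → ℚ) :
    ip (∑ k ∈ s, A k) x = ∑ k ∈ s, ip (A k) x := by
  simp [ip, Finset.sum_mul]
  exact Finset.sum_comm

/-- Farkas' lemma over `ℚ` (conic form), by induction on the set of constraints. -/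
theorem farkas_aux {κ : Type} [DecidableEq κ] (s : Finset κ) :
    ∀ (A : κ → α → ℚ) (c : α → ℚ),
    (∀ x : α → ℚ, (∀ k ∈ s, 0 ≤ ip (A k) x) → 0 ≤ ip c x) →
    ∃ u : κ → ℚ, (∀ k, 0 ≤ u k) ∧ c = ∑ k ∈ s, u k • A k := by
  classical
  induction s using Finset.induction_on with
  | empty =>
    intro A c h
    refine ⟨fun _ => 0, fun _ => le_rfl, ?_⟩
    have h2 := h (-c) (by simp)
    have h3 : ip c (-c) = -ip c c := by
      simp [ip, mul_neg, Finset.sum_neg_distrib]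
    have hcc : ip c c ≤ 0 := by rw [h3] at h2; linarith
    have hnn : ∀ i ∈ (Finset.univ : Finset α), 0 ≤ c i * c i := fun i _ => mul_self_nonneg _
    have : ip c c = 0 := le_antisymm hcc (Finset.sum_nonneg hnn)
    have hz : ∀ i ∈ (Finset.univ : Finset α), c i * c i = 0 :=
      (Finset.sum_eq_zero_iff_of_nonneg hnn).1 this
    funext i
    simpa [mul_self_eq_zero] using hz i (Finset.mem_univ i)
  | @insert a s ha ih =>
    intro A c h
    by_cases hw : ∀ x : α → ℚ, (∀ k ∈ s, 0 ≤ ip (A k) x) → 0 ≤ ip c x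
    · obtain ⟨u, hu, hc⟩ := ih A c hw
      refine ⟨Function.update u a 0, ?_, ?_⟩
      · intro k; rcases eq_or_ne k a with rfl | hk
        · simp
        · simpa [Function.update_of_ne hk] using hu k
      · rw [Finset.sum_insert ha, hc]
        simp only [Function.update_self, zero_smul, zero_add]
        exact Finset.sum_congr rfl fun k hk => by
          rw [Function.update_of_ne (by rintro rfl; exact ha hk)]
    · push_neg at hw
      obtain ⟨x₀, hx₀, hcx₀⟩ := hw
      have hd : ip (A a) x₀ < 0 := by
        by_contra hge
        push_neg at hge
        have := h x₀ (fun k hk => by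
          rcases Finset.mem_insert.1 hk with rfl | hk
          · exact hge
          · exact hx₀ k hk)
        linarith
      set d := ip (A a) x₀ with hdd
      have hdne : d ≠ 0 := ne_of_lt hd
      set A' : κ → α → ℚ := fun k => A k - (ip (A k) x₀ / d) • A a with hA'
      set c' : α → ℚ := c - (ip c x₀ / d) • A a with hc'
      have key : ∀ (v x : α → ℚ),
          ip (v - (ip v x₀ / d) • A a) x = ip v (x - (ip (A a) x / d) • x₀) := by
        intro v x
        rw [ip_sub_left, ip_smul_left, ip_sub_right, ip_smul_right]
        ring
      have hyp' : ∀ x : α → ℚ, (∀ k ∈ s, 0 ≤ ip (A' k) x) → 0 ≤ ip c' x := by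
        intro x hx
        set x' := x - (ip (A a) x / d) • x₀ with hx'
        have hAa : ip (A a) x' = 0 := by
          rw [hx', ip_sub_right, ip_smul_right, ← hdd, div_mul_cancel₀ _ hdne, sub_self]
        have : 0 ≤ ip c x' := by
          apply h
          intro k hk
          rcases Finset.mem_insert.1 hk with rfl | hk
          · rw [hAa]
          · rw [← key (A k) x]; exact hx k hk
        rw [hc', key c x]; exact this
      obtain ⟨u, hu, hcu⟩ := ih A' c' hyp'
      set lam : ℚ := (ip c x₀ - ∑ k ∈ s, u k * ip (A k) x₀) / d with hlam
      have hlamnn : 0 ≤ lam := by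
        have hnum : ip c x₀ - ∑ k ∈ s, u k * ip (A k) x₀ ≤ 0 := by
          have : 0 ≤ ∑ k ∈ s, u k * ip (A k) x₀ :=
            Finset.sum_nonneg fun k hk => mul_nonneg (hu k) (hx₀ k hk)
          linarith
        rw [hlam, ← neg_div_neg_eq]
        exact div_nonneg (by linarith) (by linarith)
      refine ⟨Function.update u a lam, ?_, ?_⟩
      · intro k; rcases eq_or_ne k a with rfl | hk
        · simpa using hlamnn
        · simpa [Function.update_of_ne hk] using hu k
      · rw [Finset.sum_insert ha]
        simp only [Function.update_self]
        have hsum : ∑ k ∈ s, Function.update u a lam k • A k = ∑ k ∈ s, u k • A k :=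
          Finset.sum_congr rfl fun k hk => by
            rw [Function.update_of_ne (by rintro rfl; exact ha hk)]
        rw [hsum]
        have hc2 : c = c' + (ip c x₀ / d) • A a := by rw [hc']; ring_nf
        rw [hc2, hcu]
        funext i
        simp only [Pi.add_apply, Pi.smul_apply, Finset.sum_apply, Pi.sub_apply, hA',
          smul_eq_mul]
        have e1 : ∑ x ∈ s, u x * (A x i - ip (A x) x₀ / d * A a i) =
            (∑ x ∈ s, u x * A x i) - (∑ x ∈ s, u x * ip (A x) x₀) * (A a i / d) := by
          simp only [mul_sub]
          rw [Finset.sum_sub_distrib]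
          congr 1
          rw [Finset.sum_mul]
          exact Finset.sum_congr rfl fun x _ => by ring
        rw [e1, hlam]
        field_simp
        ring

theorem farkas {κ : Type} [Fintype κ] (A : κ → α → ℚ) (c : α → ℚ)
    (h : ∀ x : α → ℚ, (∀ k, 0 ≤ ip (A k) x) → 0 ≤ ip c x) :
    ∃ u : κ → ℚ, (∀ k, 0 ≤ u k) ∧ c = ∑ k : κ, u k • A k := by
  classical
  exact farkas_aux Finset.univ A c (fun x hx => h x (fun k => hx k (Finset.mem_univ k)))

end Farkas

section Dev
set_option linter.unusedSectionVars false

variable {D : Type} [Fintype D] [DecidableEq D]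

/-- Index type for the constraints of the indicator instance: a cost function together
with an `m`-tuple of rows. -/
abbrev SIdx (D : Type) (m : ℕ) : Type := Σ p : (Σ r : ℕ, CostF D r), (Fin m → Fin p.1 → D)

open Classical in
/-- The finite set of constraints: cost functions of `Γ` with feasible tuples of rows. -/
noncomputable def Sfin (Γ : VLang D) (hfin : Γ.Finite) (m : ℕ) : Finset (SIdx D m) :=
  hfin.toFinset.sigma fun p =>
    Finset.univ.filter fun xs : Fin m → Fin p.1 → D => ∀ i, xs i ∈ Feas p.2

/-- The rational value of constraint `s` at operation `h` (junk value `0` if infeasible). -/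
noncomputable def Aq {m : ℕ} (s : SIdx D m) (h : Op D m) : ℚ :=
  WithTop.untopD 0 (s.1.2 (appRows h s.2))

lemma mem_Sfin {Γ : VLang D} {hfin : Γ.Finite} {m : ℕ} {s : SIdx D m} :
    s ∈ Sfin Γ hfin m ↔ s.1 ∈ Γ ∧ ∀ i, s.2 i ∈ Feas s.1.2 := by
  obtain ⟨p, xs⟩ := s
  simp [Sfin, Finset.mem_sigma, Set.Finite.mem_toFinset, Finset.mem_filter]

lemma proj_mem_Pol (Γ : VLang D) (m : ℕ) (i : Fin m) : proj D i ∈ Pol Γ m := by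
  intro ϱ _ xs hxs
  exact hxs i

lemma proj_mem_PolPlus (Γ : VLang D) (m : ℕ) (i : Fin m) : proj D i ∈ PolPlus Γ m :=
  Or.inl ⟨i, rfl⟩

lemma polPlus_subset_Pol {Γ : VLang D} {m : ℕ} {f : Op D m} (hf : f ∈ PolPlus Γ m) :
    f ∈ Pol Γ m := by
  rcases hf with ⟨i, rfl⟩ | ⟨ω, hω, hpos⟩
  · exact proj_mem_Pol Γ _ i
  · exact hω.1.support_mem f (ne_of_gt hpos)

lemma A_eq_coe {Γ : VLang D} {hfin : Γ.Finite} {m : ℕ} {s : SIdx D m} {h : Op D m}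
    (hh : h ∈ Pol Γ m) (hs : s ∈ Sfin Γ hfin m) :
    s.1.2 (appRows h s.2) = ((Aq s h : ℚ) : WithTop ℚ) := by
  obtain ⟨h1, h2⟩ := mem_Sfin.1 hs
  have hne : s.1.2 (appRows h s.2) ≠ ⊤ := hh s.1 h1 s.2 h2
  obtain ⟨q, hq⟩ := WithTop.ne_top_iff_exists.1 hne
  rw [← hq, Aq, ← hq, WithTop.untopD_coe]

lemma wSum_eq {Γ : VLang D} {hfin : Γ.Finite} {m : ℕ} {ω : Op D m → ℚ}
    (hsupp : ∀ h, ω h ≠ 0 → h ∈ Pol Γ m) {s : SIdx D m} (hs : s ∈ Sfin Γ hfin m) :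
    wSum ω s.1.2 s.2 = ((∑ h : Op D m, ω h * Aq s h : ℚ) : WithTop ℚ) := by
  have hfilter : (∑ h : Op D m, ω h * Aq s h : ℚ)
      = ∑ h ∈ Finset.univ.filter (fun h : Op D m => ω h ≠ 0), ω h * Aq s h :=
    (Finset.sum_filter_of_ne fun h _ hne => left_ne_zero_of_mul hne).symm
  rw [wSum, hfilter, WithTop.coe_sum]
  refine Finset.sum_congr rfl fun h hh => ?_
  have hPol : h ∈ Pol Γ m := hsupp h (Finset.mem_filter.1 hh).2
  rw [A_eq_coe hPol hs, qmul, WithTop.map_coe]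

lemma wPol_ineq {Γ : VLang D} {hfin : Γ.Finite} {m : ℕ} {ω : Op D m → ℚ}
    (hω : ω ∈ wPol Γ m) {s : SIdx D m} (hs : s ∈ Sfin Γ hfin m) :
    ∑ h : Op D m, ω h * Aq s h ≤ 0 := by
  obtain ⟨h1, h2⟩ := mem_Sfin.1 hs
  have := hω.2 s.1 h1 s.2 h2
  rw [wSum_eq (fun h => hω.1.support_mem h) hs] at this
  exact_mod_cast this

lemma mem_wPol_of {Γ : VLang D} {hfin : Γ.Finite} {m : ℕ} {ω : Op D m → ℚ}
    (h0 : ∀ h, h ∉ Pol Γ m → ω h = 0)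
    (h1 : ∀ h, ω h < 0 → IsProj h)
    (h2 : ∑ h : Op D m, ω h = 0)
    (h3 : ∀ s ∈ Sfin Γ hfin m, ∑ h : Op D m, ω h * Aq s h ≤ 0) :
    ω ∈ wPol Γ m := by
  have hsupp : ∀ h : Op D m, ω h ≠ 0 → h ∈ Pol Γ m := by
    intro h hne
    by_contra hn
    exact hne (h0 h hn)
  refine ⟨⟨hsupp, h2, h1⟩, ?_⟩
  intro ϱ hϱ xs hxs
  have hs : (⟨ϱ, xs⟩ : SIdx D m) ∈ Sfin Γ hfin m := mem_Sfin.2 ⟨hϱ, hxs⟩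
  have := h3 _ hs
  rw [wSum_eq hsupp hs]
  exact_mod_cast this

/-- The value of a weighted instance (weights `y` on the constraints of the indicator)
at an operation `h`. -/
noncomputable def Vv (Γ : VLang D) (hfin : Γ.Finite) (m : ℕ) (y : SIdx D m → ℚ)
    (h : Op D m) : ℚ :=
  ∑ s ∈ Sfin Γ hfin m, y s * Aq s h

lemma val_eq_of_polPlus {Γ : VLang D} {hfin : Γ.Finite} {m : ℕ}
    {y : SIdx D m → ℚ} (hy : ∀ s ∈ Sfin Γ hfin m, 0 ≤ y s) {P : ℚ}
    (hproj : ∀ i : Fin m, Vv Γ hfin m y (proj D i) = P)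
    (hT : ∀ h ∈ Pol Γ m, P ≤ Vv Γ hfin m y h)
    {g : Op D m} (hg : g ∈ PolPlus Γ m) :
    Vv Γ hfin m y g = P := by
  rcases hg with ⟨i, rfl⟩ | ⟨ω, hω, hpos⟩
  · exact hproj i
  · have hterm : ∀ h : Op D m, 0 ≤ ω h * (Vv Γ hfin m y h - P) := by
      intro h
      rcases lt_trichotomy (ω h) 0 with hlt | heq | hgt
      · obtain ⟨i, rfl⟩ := hω.1.neg_imp_proj h hlt
        rw [hproj i]
        simp
      · simp [heq]
      · have hh : h ∈ Pol Γ m := hω.1.support_mem h (ne_of_gt hgt)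
        exact mul_nonneg (le_of_lt hgt) (by linarith [hT h hh])
    have hsum0 : ∑ h : Op D m, ω h * (Vv Γ hfin m y h - P) ≤ 0 := by
      have e1 : ∑ h : Op D m, ω h * (Vv Γ hfin m y h - P)
          = ∑ h : Op D m, ω h * Vv Γ hfin m y h := by
        simp only [mul_sub]
        rw [Finset.sum_sub_distrib, ← Finset.sum_mul, hω.1.sum_zero, zero_mul, sub_zero]
      have e2 : ∑ h : Op D m, ω h * Vv Γ hfin m y h
          = ∑ s ∈ Sfin Γ hfin m, y s * ∑ h : Op D m, ω h * Aq s h := by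
        simp only [Vv, Finset.mul_sum]
        rw [Finset.sum_comm]
        refine Finset.sum_congr rfl fun s _ => Finset.sum_congr rfl fun h _ => by ring
      rw [e1, e2]
      exact Finset.sum_nonpos fun s hs =>
        mul_nonpos_of_nonneg_of_nonpos (hy s hs) (wPol_ineq hω hs)
    have hall : ∀ h ∈ (Finset.univ : Finset (Op D m)), ω h * (Vv Γ hfin m y h - P) = 0 := by
      apply (Finset.sum_eq_zero_iff_of_nonneg fun h _ => hterm h).1
      exact le_antisymm hsum0 (Finset.sum_nonneg fun h _ => hterm h)
    have := hall g (Finset.mem_univ g)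
    rcases mul_eq_zero.1 this with h' | h'
    · exact absurd h' (ne_of_gt hpos)
    · linarith

end Dev

section Dev2
set_option linter.unusedSectionVars false
set_option maxHeartbeats 1000000

variable {D : Type} [Fintype D] [DecidableEq D]

lemma ip_single {β : Type} [Fintype β] [DecidableEq β] (P : Prop) [Decidable P]
    (b : β) (c : ℚ) (x : β → ℚ) :
    ip (fun z => if P ∧ z = b then c else 0) x = if P then c * x b else 0 := by
  rw [ip]
  split_ifs with hP
  · rw [Finset.sum_eq_single_of_mem b (Finset.mem_univ b)
      (fun z _ hz => by simp [hz])]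
    simp [hP]
  · exact Finset.sum_eq_zero fun z _ => by simp [hP]

/-- Index type of the rows of the Farkas system. -/
abbrev KIdx (Γ : VLang D) (hfin : Γ.Finite) (m : ℕ) : Type :=
  {s // s ∈ Sfin Γ hfin m} ⊕ (Op D m ⊕ (Op D m ⊕ Bool))

open Classical in
/-- The rows of the Farkas system. -/
noncomputable def Brows (Γ : VLang D) (hfin : Γ.Finite) (m : ℕ) :
    KIdx Γ hfin m → Op D m → ℚ
  | Sum.inl s => fun h => -(Aq s.1 h)
  | Sum.inr (Sum.inl h') => fun z => if ¬IsProj h' ∧ z = h' then 1 else 0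
  | Sum.inr (Sum.inr (Sum.inl h')) => fun z => if h' ∉ Pol Γ m ∧ z = h' then -1 else 0
  | Sum.inr (Sum.inr (Sum.inr b)) => fun _ => if b then 1 else -1

lemma exists_cert {Γ : VLang D} (hfin : Γ.Finite) {m : ℕ} {g : Op D m}
    (hgT : g ∈ Pol Γ m) (hgp : ¬IsProj g) (hgP : g ∉ PolPlus Γ m) :
    ∃ (y : SIdx D m → ℚ) (μ : ℚ),
      (∀ s ∈ Sfin Γ hfin m, 0 ≤ y s) ∧
      (∀ i : Fin m, Vv Γ hfin m y (proj D i) = μ) ∧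
      (∀ h ∈ Pol Γ m, μ ≤ Vv Γ hfin m y h) ∧
      μ + 1 ≤ Vv Γ hfin m y g := by
  classical
  set c : Op D m → ℚ := fun z => if ¬IsProj g ∧ z = g then -1 else 0 with hc
  have main : ∀ x : Op D m → ℚ, (∀ k, 0 ≤ ip (Brows Γ hfin m k) x) → 0 ≤ ip c x := by
    intro x hx
    have hnn : ∀ h', ¬IsProj h' → 0 ≤ x h' := by
      intro h' hp
      have h1 := hx (Sum.inr (Sum.inl h'))
      rw [Brows, ip_single] at h1
      simpa [hp] using h1
    have hz : ∀ h', h' ∉ Pol Γ m → x h' = 0 := by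
      intro h' hp
      have h1 := hx (Sum.inr (Sum.inr (Sum.inl h')))
      rw [Brows, ip_single] at h1
      rw [if_pos hp] at h1
      have h2 : ¬IsProj h' := fun ⟨i, hi⟩ => hp (hi ▸ proj_mem_Pol Γ m i)
      have h3 := hnn h' h2
      linarith
    have hsum : ∑ h : Op D m, x h = 0 := by
      have h1 := hx (Sum.inr (Sum.inr (Sum.inr true)))
      have h2 := hx (Sum.inr (Sum.inr (Sum.inr false)))
      have e4t : Brows Γ hfin m (Sum.inr (Sum.inr (Sum.inr true))) = fun _ => (1 : ℚ) := rfl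
      have e4f : Brows Γ hfin m (Sum.inr (Sum.inr (Sum.inr false))) = fun _ => (-1 : ℚ) := rfl
      rw [e4t] at h1
      rw [e4f] at h2
      have h1' : 0 ≤ ∑ z : Op D m, x z := by simpa [ip] using h1
      have h2' : 0 ≤ -∑ z : Op D m, x z := by
        simpa [ip, neg_mul, Finset.sum_neg_distrib] using h2
      linarith
    have hA : ∀ s ∈ Sfin Γ hfin m, ∑ h : Op D m, x h * Aq s h ≤ 0 := by
      intro s hs
      have h1 := hx (Sum.inl ⟨s, hs⟩)
      rw [Brows, ip] at h1
      simp only [neg_mul] at h1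
      rw [Finset.sum_neg_distrib] at h1
      have : ∑ h : Op D m, Aq s h * x h ≤ 0 := by linarith
      calc ∑ h : Op D m, x h * Aq s h = ∑ h : Op D m, Aq s h * x h :=
            Finset.sum_congr rfl fun h _ => mul_comm _ _
        _ ≤ 0 := this
    have hneg : ∀ h, x h < 0 → IsProj h := by
      intro h hlt
      by_contra hp
      exact absurd (hnn h hp) (not_le.2 hlt)
    have hmem : x ∈ wPol Γ m := mem_wPol_of hz hneg hsum hA
    have hxg : x g ≤ 0 := by
      by_contra hpos
      push_neg at hpos
      exact hgP (Or.inr ⟨x, hmem, hpos⟩)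
    rw [hc, ip_single, if_pos hgp]
    linarith
  obtain ⟨u, hu, hcu⟩ := farkas (Brows Γ hfin m) c main
  set y : SIdx D m → ℚ :=
    fun s => if hs : s ∈ Sfin Γ hfin m then u (Sum.inl ⟨s, hs⟩) else 0 with hy
  set μ : ℚ := u (Sum.inr (Sum.inr (Sum.inr true))) - u (Sum.inr (Sum.inr (Sum.inr false)))
    with hμ
  have coord : ∀ h : Op D m, h ∈ Pol Γ m →
      (if ¬IsProj g ∧ h = g then (-1 : ℚ) else 0) =
        -(Vv Γ hfin m y h) + (if ¬IsProj h then u (Sum.inr (Sum.inl h)) else 0) + μ := by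
    intro h hh
    have e0 := congrFun hcu h
    rw [Finset.sum_apply] at e0
    simp only [Pi.smul_apply, smul_eq_mul] at e0
    rw [Fintype.sum_sum_type, Fintype.sum_sum_type, Fintype.sum_sum_type,
      Fintype.sum_bool] at e0
    have e1 : ∑ s : {s // s ∈ Sfin Γ hfin m}, u (Sum.inl s) * Brows Γ hfin m (Sum.inl s) h
        = -(Vv Γ hfin m y h) := by
      rw [Vv, ← Finset.sum_attach (Sfin Γ hfin m) (fun s => y s * Aq s h),
        Finset.univ_eq_attach]
      rw [← Finset.sum_neg_distrib]
      refine Finset.sum_congr rfl fun s _ => ?_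
      rw [Brows]
      have : y s.1 = u (Sum.inl s) := by rw [hy]; simp [s.2]
      rw [this]
      ring
    have e2 : ∑ h' : Op D m, u (Sum.inr (Sum.inl h')) * Brows Γ hfin m (Sum.inr (Sum.inl h')) h
        = if ¬IsProj h then u (Sum.inr (Sum.inl h)) else 0 := by
      rw [Finset.sum_eq_single_of_mem h (Finset.mem_univ h)
        (fun z _ hz => by rw [Brows]; simp [Ne.symm hz])]
      rw [Brows]
      by_cases hp : IsProj h
      · simp [hp]
      · simp [hp]
    have e3 : ∑ h' : Op D m,
        u (Sum.inr (Sum.inr (Sum.inl h'))) * Brows Γ hfin m (Sum.inr (Sum.inr (Sum.inl h'))) h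
        = 0 := by
      refine Finset.sum_eq_zero fun z _ => ?_
      rw [Brows]
      rcases eq_or_ne h z with rfl | hz
      · refine mul_eq_zero_of_right _ (if_neg ?_)
        rintro ⟨hzp, -⟩
        exact hzp hh
      · refine mul_eq_zero_of_right _ (if_neg ?_)
        rintro ⟨-, hzq⟩
        exact hz hzq
    have e4t : Brows Γ hfin m (Sum.inr (Sum.inr (Sum.inr true))) h = 1 := rfl
    have e4f : Brows Γ hfin m (Sum.inr (Sum.inr (Sum.inr false))) h = -1 := rfl
    rw [e1, e2, e3, e4t, e4f] at e0
    have ec : c h = (if ¬IsProj g ∧ h = g then (-1 : ℚ) else 0) := rfl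
    rw [ec] at e0
    rw [e0, hμ]
    ring
  refine ⟨y, μ, ?_, ?_, ?_, ?_⟩
  · intro s hs
    rw [hy]
    simpa [hs] using hu (Sum.inl ⟨s, hs⟩)
  · intro i
    have := coord (proj D i) (proj_mem_Pol Γ m i)
    rw [if_neg (fun hcond : ¬IsProj g ∧ proj D i = g => hgp (hcond.2 ▸ ⟨i, rfl⟩)),
      if_neg (not_not_intro ⟨i, rfl⟩)] at this
    linarith
  · intro h hh
    have := coord h hh
    rcases eq_or_ne h g with rfl | hne
    · rw [if_pos ⟨hgp, rfl⟩, if_pos hgp] at this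
      have := hu (Sum.inr (Sum.inl h))
      linarith
    · rw [if_neg (fun hcond : ¬IsProj g ∧ h = g => hne hcond.2)] at this
      have h2 : (0:ℚ) ≤ if ¬IsProj h then u (Sum.inr (Sum.inl h)) else 0 := by
        split_ifs <;> first | exact hu _ | exact le_rfl
      linarith
  · have := coord g hgT
    rw [if_pos ⟨hgp, rfl⟩, if_pos hgp] at this
    have h2 := hu (Sum.inr (Sum.inl g))
    linarith

end Dev2

section Dev3
set_option linter.unusedSectionVars false
set_option maxHeartbeats 1000000

variable {D : Type} [Fintype D] [DecidableEq D]

lemma exists_natCert {Γ : VLang D} (hfin : Γ.Finite) {m : ℕ} {g : Op D m}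
    (hgT : g ∈ Pol Γ m) (hgp : ¬IsProj g) (hgP : g ∉ PolPlus Γ m) :
    ∃ (N : SIdx D m → ℕ) (μ : ℚ),
      (∀ i : Fin m, Vv Γ hfin m (fun s => (N s : ℚ)) (proj D i) = μ) ∧
      (∀ h ∈ Pol Γ m, μ ≤ Vv Γ hfin m (fun s => (N s : ℚ)) h) ∧
      μ + 1 ≤ Vv Γ hfin m (fun s => (N s : ℚ)) g := by
  classical
  obtain ⟨y, μ, hy, hproj, hT, hg⟩ := exists_cert hfin hgT hgp hgP
  set d : ℕ := ∏ s ∈ Sfin Γ hfin m, (y s).den with hd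
  have hd0 : 0 < d := Finset.prod_pos fun s _ => (y s).pos
  have hex : ∀ s : SIdx D m, ∃ n : ℕ, (n : ℚ) = (if s ∈ Sfin Γ hfin m then y s else 0) * d := by
    intro s
    by_cases hs : s ∈ Sfin Γ hfin m
    · obtain ⟨k, hk⟩ : (y s).den ∣ d := Finset.dvd_prod_of_mem _ hs
      refine ⟨(y s).num.toNat * k, ?_⟩
      have h1 : ((y s).num.toNat : ℤ) = (y s).num :=
        Int.toNat_of_nonneg (Rat.num_nonneg.2 (hy s hs))
      have h1q : (((y s).num.toNat : ℕ) : ℚ) = ((y s).num : ℚ) := by exact_mod_cast h1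
      rw [if_pos hs]
      calc ((((y s).num.toNat : ℕ) * k : ℕ) : ℚ)
          = ((y s).num : ℚ) * k := by rw [Nat.cast_mul, h1q]
        _ = (y s * (y s).den) * k := by rw [Rat.mul_den_eq_num]
        _ = y s * (((y s).den * k : ℕ) : ℚ) := by push_cast; ring
        _ = y s * d := by rw [← hk]
    · exact ⟨0, by simp [hs]⟩
  choose N hN using hex
  have hVd : ∀ h : Op D m,
      Vv Γ hfin m (fun s => (N s : ℚ)) h = d * Vv Γ hfin m y h := by
    intro h
    rw [Vv, Vv, Finset.mul_sum]
    refine Finset.sum_congr rfl fun s hs => ?_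
    rw [hN s, if_pos hs]
    ring
  refine ⟨N, d * μ, ?_, ?_, ?_⟩
  · intro i
    rw [hVd, hproj i]
  · intro h hh
    rw [hVd]
    have := hT h hh
    have hdq : (0:ℚ) ≤ d := by positivity
    nlinarith
  · rw [hVd]
    have hdq : (1:ℚ) ≤ d := by exact_mod_cast hd0
    nlinarith

lemma subset_wRelClo (Γ : VLang D) : Γ ⊆ wRelClo Γ :=
  fun p hp => Set.mem_sInter.2 fun _ hΔ => hΔ.1 hp

lemma isWClosed_wRelClo (Γ : VLang D) : IsWClosed (wRelClo Γ) := by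
  refine ⟨?_, ?_, ?_⟩
  · intro r ϱ hexp
    refine Set.mem_sInter.2 fun Δ hΔ => ?_
    obtain ⟨n, I, v, hI⟩ := hexp
    have hsub : wRelClo Γ ⊆ Δ := fun p hp => Set.mem_sInter.1 hp Δ hΔ
    exact hΔ.2.1 r ϱ ⟨n, ⟨I.cons, fun c hc => hsub (I.mem_lang c hc)⟩, v, hI⟩
  · intro r ϱ c hc hmem
    exact Set.mem_sInter.2 fun Δ hΔ => hΔ.2.2.1 r ϱ c hc (Set.mem_sInter.1 hmem Δ hΔ)
  · intro r ϱ c hmem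
    exact Set.mem_sInter.2 fun Δ hΔ => hΔ.2.2.2 r ϱ c (Set.mem_sInter.1 hmem Δ hΔ)

/-- Scope of the constraint `s` in the indicator instance. -/
noncomputable def scopeOf {m : ℕ} (e : Fin (Fintype.card (Fin m → D)) ≃ (Fin m → D))
    (s : SIdx D m) : Fin s.1.1 → Fin (Fintype.card (Fin m → D)) :=
  fun t => e.symm fun i => s.2 i t

/-- The separating cost function. -/
noncomputable def rhoStar (Γ : VLang D) (hfin : Γ.Finite) (m : ℕ)
    (e : Fin (Fintype.card (Fin m → D)) ≃ (Fin m → D)) (N : SIdx D m → ℕ) :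
    CostF D (Fintype.card (Fin m → D)) :=
  fun x => ∑ s ∈ Sfin Γ hfin m,
    ((N s) • (s.1.2 fun t => x (scopeOf e s t)) + qmul 0 (s.1.2 fun t => x (scopeOf e s t)))

end Dev3

section Dev4
set_option linter.unusedSectionVars false
set_option maxHeartbeats 1000000

variable {D : Type} [Fintype D] [DecidableEq D]

lemma nsmul_coe (n : ℕ) (q : ℚ) : n • ((q : ℚ) : WithTop ℚ) = (((n : ℚ) * q : ℚ) : WithTop ℚ) := by
  have h1 : n • ((q : ℚ) : WithTop ℚ) = ((n • q : ℚ) : WithTop ℚ) := by push_cast; ring_nf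
  rw [h1, nsmul_eq_mul]

lemma nsmul_top (n : ℕ) : ∀ (x : WithTop ℚ), n • x + ⊤ = ⊤ := fun x => add_top _

lemma qmul_coe (c q : ℚ) : qmul c ((q : ℚ) : WithTop ℚ) = ((c * q : ℚ) : WithTop ℚ) := by
  rw [qmul, WithTop.map_coe]

lemma qmul_top (c : ℚ) : qmul c (⊤ : WithTop ℚ) = ⊤ := rfl

/-- The indicator instance certifying expressibility of `rhoStar`. -/
noncomputable def indInstance (Γ : VLang D) (hfin : Γ.Finite) (m : ℕ)
    (e : Fin (Fintype.card (Fin m → D)) ≃ (Fin m → D)) (N : SIdx D m → ℕ) :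
    VInstance D (wRelClo Γ) (Fin (Fintype.card (Fin m → D))) where
  cons := (Sfin Γ hfin m).val.bind fun s =>
    Multiset.replicate (N s) ⟨s.1.1, (scopeOf e s, s.1.2)⟩ +
      {⟨s.1.1, (scopeOf e s, fun z => qmul 0 (s.1.2 z))⟩}
  mem_lang := by
    intro c hc
    rw [Multiset.mem_bind] at hc
    obtain ⟨s, hs, hc⟩ := hc
    have hsΓ : s.1 ∈ Γ := (mem_Sfin.1 hs).1
    rcases Multiset.mem_add.1 hc with hc | hc
    · have := Multiset.eq_of_mem_replicate hc
      subst this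
      exact subset_wRelClo Γ hsΓ
    · have := Multiset.mem_singleton.1 hc
      subst this
      exact (isWClosed_wRelClo Γ).2.1 s.1.1 s.1.2 0 le_rfl (subset_wRelClo Γ hsΓ)

lemma indInstance_cost (Γ : VLang D) (hfin : Γ.Finite) (m : ℕ)
    (e : Fin (Fintype.card (Fin m → D)) ≃ (Fin m → D)) (N : SIdx D m → ℕ)
    (x : Fin (Fintype.card (Fin m → D)) → D) :
    (indInstance Γ hfin m e N).cost x = rhoStar Γ hfin m e N x := by
  rw [VInstance.cost, indInstance, Multiset.map_bind, Multiset.sum_bind, rhoStar]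
  show ((Sfin Γ hfin m).val.map _).sum = _
  refine congrArg Multiset.sum (Multiset.map_congr rfl fun s _ => ?_)
  rw [Multiset.map_add, Multiset.sum_add, Multiset.map_replicate, Multiset.sum_replicate,
    Multiset.map_singleton, Multiset.sum_singleton]

lemma rhoStar_mem (Γ : VLang D) (hfin : Γ.Finite) (m : ℕ)
    (e : Fin (Fintype.card (Fin m → D)) ≃ (Fin m → D)) (N : SIdx D m → ℕ) :
    (⟨Fintype.card (Fin m → D), rhoStar Γ hfin m e N⟩ : Σ r : ℕ, CostF D r) ∈ wRelClo Γ := by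
  classical
  apply (isWClosed_wRelClo Γ).1
  refine ⟨Fintype.card (Fin m → D), indInstance Γ hfin m e N, fun j => j, fun x => ?_⟩
  have hfilt : (Finset.univ.filter fun s : Fin (Fintype.card (Fin m → D)) → D =>
      ∀ i, s ((fun j => j) i) = x i) = {x} := by
    ext t
    simp [funext_iff]
  rw [hfilt, Finset.inf_singleton, indInstance_cost]

lemma rhoStar_apply (Γ : VLang D) (hfin : Γ.Finite) (m : ℕ)
    (e : Fin (Fintype.card (Fin m → D)) ≃ (Fin m → D)) (N : SIdx D m → ℕ) (f : Op D m) :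
    rhoStar Γ hfin m e N (fun j => f (e j)) =
      ∑ s ∈ Sfin Γ hfin m,
        ((N s) • (s.1.2 (appRows f s.2)) + qmul 0 (s.1.2 (appRows f s.2))) := by
  rw [rhoStar]
  refine Finset.sum_congr rfl fun s _ => ?_
  have hcol : (fun t => f (e (scopeOf e s t))) = appRows f s.2 := by
    funext t
    rw [scopeOf, Equiv.apply_symm_apply]
    rfl
  rw [hcol]

lemma rhoStar_apply_pol (Γ : VLang D) (hfin : Γ.Finite) (m : ℕ)
    (e : Fin (Fintype.card (Fin m → D)) ≃ (Fin m → D)) (N : SIdx D m → ℕ) {f : Op D m}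
    (hf : f ∈ Pol Γ m) :
    rhoStar Γ hfin m e N (fun j => f (e j)) =
      ((Vv Γ hfin m (fun s => (N s : ℚ)) f : ℚ) : WithTop ℚ) := by
  rw [rhoStar_apply, Vv, WithTop.coe_sum]
  refine Finset.sum_congr rfl fun s hs => ?_
  rw [A_eq_coe hf hs, nsmul_coe, qmul_coe, zero_mul, ← WithTop.coe_add, add_zero]

lemma rhoStar_apply_top (Γ : VLang D) (hfin : Γ.Finite) (m : ℕ)
    (e : Fin (Fintype.card (Fin m → D)) ≃ (Fin m → D)) (N : SIdx D m → ℕ) {f : Op D m}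
    (hf : f ∉ Pol Γ m) :
    rhoStar Γ hfin m e N (fun j => f (e j)) = ⊤ := by
  rw [rhoStar_apply]
  simp only [Pol, Set.mem_setOf_eq, not_forall] at hf
  obtain ⟨p, hp, hnpol⟩ := hf
  rw [IsPolymorphism] at hnpol
  push_neg at hnpol
  obtain ⟨xs, hxs, hnfeas⟩ := hnpol
  have hmem : (⟨p, xs⟩ : SIdx D m) ∈ Sfin Γ hfin m := mem_Sfin.2 ⟨hp, hxs⟩
  have htop : p.2 (appRows f xs) = ⊤ := not_not.1 hnfeas
  refine WithTop.sum_eq_top.2 ⟨⟨p, xs⟩, hmem, ?_⟩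
  show _ + qmul 0 (p.2 (appRows f xs)) = ⊤
  rw [htop, qmul_top, add_top]

theorem main_aux (Γ : VLang D) (hfin : Γ.Finite) (m : ℕ)
    (e : Fin (Fintype.card (Fin m → D)) ≃ (Fin m → D)) (N : SIdx D m → ℕ) (P : ℚ)
    (hproj : ∀ i : Fin m, Vv Γ hfin m (fun s => (N s : ℚ)) (proj D i) = P)
    (hT : ∀ h ∈ Pol Γ m, P ≤ Vv Γ hfin m (fun s => (N s : ℚ)) h)
    (hbad : ∀ g ∈ Pol Γ m, ¬IsProj g → g ∉ PolPlus Γ m →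
      P + 1 ≤ Vv Γ hfin m (fun s => (N s : ℚ)) g) :
    ∃ (ϱ : CostF D (Fintype.card (Fin m → D))) (P : ℚ),
      (⟨Fintype.card (Fin m → D), ϱ⟩ : Σ r : ℕ, CostF D r) ∈ wRelClo Γ ∧
      ∀ f : Op D m,
        (P : WithTop ℚ) ≤ ϱ (fun j => f (e j)) ∧
        (ϱ (fun j => f (e j)) ≠ ⊤ ↔ f ∈ Pol Γ m) ∧
        (ϱ (fun j => f (e j)) = (P : WithTop ℚ) ↔ f ∈ PolPlus Γ m) := by
  refine ⟨rhoStar Γ hfin m e N, P, rhoStar_mem Γ hfin m e N, fun f => ?_⟩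
  by_cases hf : f ∈ Pol Γ m
  · rw [rhoStar_apply_pol Γ hfin m e N hf]
    refine ⟨?_, ?_, ?_⟩
    · exact_mod_cast hT f hf
    · exact iff_of_true (WithTop.coe_ne_top) hf
    · constructor
      · intro hval
        have hval' : Vv Γ hfin m (fun s => (N s : ℚ)) f = P := by exact_mod_cast hval
        by_contra hnp
        have hnproj : ¬IsProj f := fun hp => hnp (Or.inl hp)
        have := hbad f hf hnproj hnp
        linarith
      · intro hfp
        have := val_eq_of_polPlus (y := fun s => ((N s : ℚ)))
          (fun s _ => by positivity) hproj hT hfp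
        exact_mod_cast congrArg (fun q : ℚ => (q : WithTop ℚ)) this
  · rw [rhoStar_apply_top Γ hfin m e N hf]
    exact ⟨le_top, iff_of_false (by simp) hf,
      iff_of_false (by simp) fun hp => hf (polPlus_subset_Pol hp)⟩

end Dev4

/-- For a finite core language `Γ` there is, for each `m`, a cost function in
`wRelClo(Γ)` of arity `|D^m|` (viewing `m`-ary operations as `|D^m|`-tuples via a fixed
enumeration `e` of `D^m`) which distinguishes `Pol_m(Γ)` and the positive clone. -/
theorem exists_costF_distinguishing_posClone {D : Type} [Fintype D] [DecidableEq D] [Nonempty D]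
    (Γ : VLang D) (hfin : Γ.Finite) (hcore : IsCore Γ) (m : ℕ)
    (e : Fin (Fintype.card (Fin m → D)) ≃ (Fin m → D)) :
    ∃ (ϱ : CostF D (Fintype.card (Fin m → D))) (P : ℚ),
      (⟨Fintype.card (Fin m → D), ϱ⟩ : Σ r : ℕ, CostF D r) ∈ wRelClo Γ ∧
      ∀ f : Op D m,
        (P : WithTop ℚ) ≤ ϱ (fun j => f (e j)) ∧
        (ϱ (fun j => f (e j)) ≠ ⊤ ↔ f ∈ Pol Γ m) ∧
        (ϱ (fun j => f (e j)) = (P : WithTop ℚ) ↔ f ∈ PolPlus Γ m) := by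
  classical
  set Bad : Finset (Op D m) :=
    Finset.univ.filter (fun g : Op D m => g ∈ Pol Γ m ∧ ¬IsProj g ∧ g ∉ PolPlus Γ m) with hBad
  have hex : ∀ g : Op D m, ∃ Nμ : (SIdx D m → ℕ) × ℚ,
      g ∈ Bad →
        ((∀ i : Fin m, Vv Γ hfin m (fun s => (Nμ.1 s : ℚ)) (proj D i) = Nμ.2) ∧
         (∀ h ∈ Pol Γ m, Nμ.2 ≤ Vv Γ hfin m (fun s => (Nμ.1 s : ℚ)) h) ∧
         Nμ.2 + 1 ≤ Vv Γ hfin m (fun s => (Nμ.1 s : ℚ)) g) := by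
    intro g
    by_cases hg : g ∈ Bad
    · obtain ⟨hg1, hg2, hg3⟩ := (Finset.mem_filter.1 hg).2
      obtain ⟨N, μ, h1, h2, h3⟩ := exists_natCert hfin hg1 hg2 hg3
      exact ⟨(N, μ), fun _ => ⟨h1, h2, h3⟩⟩
    · exact ⟨(0, 0), fun h => absurd h hg⟩
  choose F hF using hex
  set Nstar : SIdx D m → ℕ := fun s => ∑ g ∈ Bad, (F g).1 s with hNstar
  set P : ℚ := ∑ g ∈ Bad, (F g).2 with hP
  have hVsum : ∀ h : Op D m,
      Vv Γ hfin m (fun s => (Nstar s : ℚ)) h =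
        ∑ g ∈ Bad, Vv Γ hfin m (fun s => ((F g).1 s : ℚ)) h := by
    intro h
    rw [Vv]
    calc ∑ s ∈ Sfin Γ hfin m, (Nstar s : ℚ) * Aq s h
        = ∑ s ∈ Sfin Γ hfin m, ∑ g ∈ Bad, ((F g).1 s : ℚ) * Aq s h := by
          refine Finset.sum_congr rfl fun s _ => ?_
          rw [hNstar]
          push_cast
          rw [Finset.sum_mul]
      _ = ∑ g ∈ Bad, ∑ s ∈ Sfin Γ hfin m, ((F g).1 s : ℚ) * Aq s h := Finset.sum_comm
      _ = ∑ g ∈ Bad, Vv Γ hfin m (fun s => ((F g).1 s : ℚ)) h := rfl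
  apply main_aux Γ hfin m e Nstar P
  · intro i
    rw [hVsum]
    exact Finset.sum_congr rfl fun g hg => (hF g hg).1 i
  · intro h hh
    rw [hVsum, hP]
    exact Finset.sum_le_sum fun g hg => (hF g hg).2.1 h hh
  · intro g hg1 hg2 hg3
    have hgB : g ∈ Bad := Finset.mem_filter.2 ⟨Finset.mem_univ g, hg1, hg2, hg3⟩
    rw [hVsum]
    have e1 : ∑ g' ∈ Bad, Vv Γ hfin m (fun s => ((F g').1 s : ℚ)) g =
        Vv Γ hfin m (fun s => ((F g).1 s : ℚ)) g +
          ∑ g' ∈ Bad.erase g, Vv Γ hfin m (fun s => ((F g').1 s : ℚ)) g :=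
      (Finset.add_sum_erase _ _ hgB).symm
    have e2 : P = (F g).2 + ∑ g' ∈ Bad.erase g, (F g').2 :=
      (Finset.add_sum_erase _ _ hgB).symm
    rw [e1, e2]
    have h3 := (hF g hgB).2.2
    have h4 : ∑ g' ∈ Bad.erase g, (F g').2 ≤
        ∑ g' ∈ Bad.erase g, Vv Γ hfin m (fun s => ((F g').1 s : ℚ)) g :=
      Finset.sum_le_sum fun g' hg' => (hF g' (Finset.mem_of_mem_erase hg')).2.1 g hg1
    linarith
end

section
/- Let Γ be a finite core valued constraint language over a finite set D, and let R ⊆ D^r be an r-ary relation that is compatible with every operation in Pol⁺(Γ). Then there exists a cost function ϱ_R of arity r in wRelClo(Γ) and a rational number P such that for every r-tuple x ∈ D^r: ϱ_R(x) ≥ P, and ϱ_R(x) = P if and only if x ∈ R. -/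
set_option linter.unusedSectionVars false
namespace VCSPAux

variable {n : Type} [Fintype n]

/-- rational dot product -/
def qdot (u v : n → ℚ) : ℚ := ∑ i, u i * v i

lemma qdot_smul_left (c : ℚ) (u v : n → ℚ) : qdot (c • u) v = c * qdot u v := by
  unfold qdot
  rw [Finset.mul_sum]
  refine Finset.sum_congr rfl fun i _ => ?_
  simp [mul_assoc]

lemma qdot_sub_left (u w v : n → ℚ) : qdot (u - w) v = qdot u v - qdot w v := by
  unfold qdot
  rw [← Finset.sum_sub_distrib]
  refine Finset.sum_congr rfl fun i _ => ?_
  simp [sub_mul]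

lemma qdot_smul_right (c : ℚ) (u v : n → ℚ) : qdot u (c • v) = c * qdot u v := by
  unfold qdot
  rw [Finset.mul_sum]
  refine Finset.sum_congr rfl fun i _ => ?_
  simp; ring

lemma qdot_sub_right (u v w : n → ℚ) : qdot u (v - w) = qdot u v - qdot u w := by
  unfold qdot
  rw [← Finset.sum_sub_distrib]
  refine Finset.sum_congr rfl fun i _ => ?_
  simp [mul_sub]

lemma qdot_self_pos {b : n → ℚ} (hb : b ≠ 0) : 0 < qdot b b := by
  obtain ⟨i, hi⟩ := Function.ne_iff.mp hb
  exact Finset.sum_pos' (fun j _ => mul_self_nonneg _)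
    ⟨i, Finset.mem_univ i, mul_self_pos.mpr hi⟩

theorem farkas {J : Type} [DecidableEq J] (s : Finset J) :
    ∀ (A : J → n → ℚ) (b : n → ℚ),
    (∃ c : J → ℚ, (∀ j, 0 ≤ c j) ∧ b = ∑ j ∈ s, c j • A j) ∨
    (∃ y : n → ℚ, (∀ j ∈ s, qdot (A j) y ≤ 0) ∧ 0 < qdot b y) := by
  induction s using Finset.induction_on with
  | empty =>
    intro A b
    by_cases hb : b = 0
    · exact Or.inl ⟨0, fun j => le_refl 0, by simp [hb]⟩
    · exact Or.inr ⟨b, by simp, qdot_self_pos hb⟩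
  | @insert j₀ s' hj₀ ih =>
    intro A b
    rcases ih A b with ⟨c, hc, hrep⟩ | ⟨y, hy, hby⟩
    · refine Or.inl ⟨fun j => if j = j₀ then 0 else c j, ?_, ?_⟩
      · intro j; by_cases h : j = j₀ <;> simp [h, hc j]
      · rw [Finset.sum_insert hj₀, hrep]
        have h1 : ∀ j ∈ s', c j • A j = (if j = j₀ then (0:ℚ) else c j) • A j := by
          intro j hj
          have hne : j ≠ j₀ := fun h => hj₀ (h ▸ hj)
          rw [if_neg hne]
        rw [Finset.sum_congr rfl h1]
        simp
    · by_cases hA : qdot (A j₀) y ≤ 0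
      · refine Or.inr ⟨y, ?_, hby⟩
        intro j hj
        rcases Finset.mem_insert.mp hj with h | h
        · exact h ▸ hA
        · exact hy j h
      · push_neg at hA
        set α := qdot (A j₀) y with hα
        have hαne : α ≠ 0 := ne_of_gt hA
        rcases ih (fun j => A j - (qdot (A j) y / α) • A j₀)
            (b - (qdot b y / α) • A j₀) with ⟨c, hc, hrep⟩ | ⟨y', hy', hb'⟩
        · set γ : ℚ := (qdot b y - ∑ j ∈ s', c j * qdot (A j) y) / α with hγ
          have hγ0 : 0 ≤ γ := by
            apply div_nonneg _ (le_of_lt hA)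
            have hsum : ∑ j ∈ s', c j * qdot (A j) y ≤ 0 :=
              Finset.sum_nonpos fun j hj => mul_nonpos_of_nonneg_of_nonpos (hc j) (hy j hj)
            linarith
          refine Or.inl ⟨fun j => if j = j₀ then γ else c j, ?_, ?_⟩
          · intro j; by_cases h : j = j₀ <;> simp [h, hγ0, hc j]
          · rw [Finset.sum_insert hj₀]
            have h1 : ∀ j ∈ s', (if j = j₀ then γ else c j) • A j = c j • A j := by
              intro j hj
              have hne : j ≠ j₀ := fun h => hj₀ (h ▸ hj)
              rw [if_neg hne]
            rw [Finset.sum_congr rfl h1]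
            simp only [if_pos rfl, if_true]
            funext i
            simp only [Pi.add_apply, Pi.smul_apply, smul_eq_mul, Finset.sum_apply]
            have hrep_i := congrFun hrep i
            simp only [Pi.sub_apply, Pi.smul_apply, smul_eq_mul, Finset.sum_apply] at hrep_i
            have h2 : ∀ j ∈ s', c j * (A j i - qdot (A j) y / α * A j₀ i)
                = c j * A j i - (c j * qdot (A j) y) * (A j₀ i / α) := by
              intro j _; ring
            rw [Finset.sum_congr rfl h2, Finset.sum_sub_distrib, ← Finset.sum_mul] at hrep_i
            have hγi : γ * A j₀ i
                = qdot b y / α * A j₀ i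
                  - (∑ j ∈ s', c j * qdot (A j) y) * (A j₀ i / α) := by
              rw [hγ]; ring
            linarith [hrep_i, hγi]
        · refine Or.inr ⟨y' - (qdot (A j₀) y' / α) • y, ?_, ?_⟩
          · intro j hj
            rw [qdot_sub_right, qdot_smul_right]
            rcases Finset.mem_insert.mp hj with h | h
            · rw [h]
              have : qdot (A j₀) y' - qdot (A j₀) y' / α * qdot (A j₀) y = 0 := by
                rw [← hα]; field_simp; ring
              linarith [this]
            · have h2 := hy' j h
              rw [qdot_sub_left, qdot_smul_left] at h2
              calc qdot (A j) y' - qdot (A j₀) y' / α * qdot (A j) y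
                  = qdot (A j) y' - qdot (A j) y / α * qdot (A j₀) y' := by ring
                _ ≤ 0 := h2
          · rw [qdot_sub_right, qdot_smul_right]
            rw [qdot_sub_left, qdot_smul_left] at hb'
            calc (0:ℚ) < qdot b y' - qdot b y / α * qdot (A j₀) y' := hb'
              _ = qdot b y' - qdot (A j₀) y' / α * qdot b y := by ring

end VCSPAux


set_option linter.unusedSectionVars false
namespace VCSPAux

section Main

variable {D : Type} [Fintype D] [DecidableEq D]

/-- Index type of (cost function, row-tuple) pairs. -/
abbrev XT (Γ : VLang D) (hfin : Γ.Finite) (m : ℕ) : Type :=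
  Σ p : {p : Σ r : ℕ, CostF D r // p ∈ hfin.toFinset}, (Fin m → Fin p.1.1 → D)

/-- The rows of `ξ` are all feasible. -/
def feasX {Γ : VLang D} {hfin : Γ.Finite} {m : ℕ} (ξ : XT Γ hfin m) : Prop :=
  ∀ i, ξ.2 i ∈ Feas ξ.1.1.2

/-- Finite rational value of applying `f` to the rows of `ξ`. -/
noncomputable def aval {Γ : VLang D} {hfin : Γ.Finite} {m : ℕ} (f : Op D m) (ξ : XT Γ hfin m) : ℚ :=
  (ξ.1.1.2 (appRows f ξ.2)).untopD 0

/-- Average of the projection values. -/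
noncomputable def bvalX {Γ : VLang D} {hfin : Γ.Finite} {m : ℕ} (ξ : XT Γ hfin m) : ℚ :=
  (m : ℚ)⁻¹ * ∑ i : Fin m, aval (proj D i) ξ

/-- Weighted cost of an operation. -/
noncomputable def Sval {Γ : VLang D} {hfin : Γ.Finite} {m : ℕ} (lam : XT Γ hfin m → ℚ) (f : Op D m) : ℚ :=
  ∑ ξ : XT Γ hfin m, lam ξ * aval f ξ

/-- Weighted cost of the average of projections. -/
noncomputable def Pval {Γ : VLang D} {hfin : Γ.Finite} {m : ℕ} (lam : XT Γ hfin m → ℚ) : ℚ :=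
  ∑ ξ : XT Γ hfin m, lam ξ * bvalX ξ

lemma appRows_proj {m q : ℕ} (i : Fin m) (xs : Fin m → Fin q → D) :
    appRows (proj D i) xs = xs i := funext fun _ => rfl

lemma proj_mem_Pol (Γ : VLang D) {m : ℕ} (i : Fin m) : proj D i ∈ Pol Γ m := by
  intro p _ xs hxs
  have h := appRows_proj (D := D) i xs
  show appRows (proj D i) xs ∈ Feas p.2
  rw [h]; exact hxs i

lemma proj_mem_PolPlus (Γ : VLang D) {m : ℕ} (i : Fin m) : proj D i ∈ PolPlus Γ m :=
  Or.inl ⟨i, rfl⟩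

lemma Pval_swap {Γ : VLang D} {hfin : Γ.Finite} {m : ℕ} (lam : XT Γ hfin m → ℚ) :
    Pval lam = (m : ℚ)⁻¹ * ∑ i : Fin m, Sval lam (proj D i) := by
  unfold Pval bvalX Sval
  rw [Finset.mul_sum]
  calc ∑ ξ : XT Γ hfin m, lam ξ * ((m:ℚ)⁻¹ * ∑ i : Fin m, aval (proj D i) ξ)
      = ∑ ξ : XT Γ hfin m, ∑ i : Fin m, (m:ℚ)⁻¹ * (lam ξ * aval (proj D i) ξ) := by
        refine Finset.sum_congr rfl fun ξ _ => ?_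
        rw [Finset.mul_sum, Finset.mul_sum]
        refine Finset.sum_congr rfl fun i _ => ?_
        ring
    _ = ∑ i : Fin m, ∑ ξ : XT Γ hfin m, (m:ℚ)⁻¹ * (lam ξ * aval (proj D i) ξ) :=
        Finset.sum_comm
    _ = ∑ i : Fin m, (m:ℚ)⁻¹ * ∑ ξ : XT Γ hfin m, lam ξ * aval (proj D i) ξ := by
        refine Finset.sum_congr rfl fun i _ => ?_
        rw [Finset.mul_sum]

/-- Extending a function on a subtype by zero does not change sums. -/
lemma sum_extend_zero {α : Type} [Fintype α] (p : α → Prop) [DecidablePred p]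
    (y : Subtype p → ℚ) :
    ∑ a : α, (if h : p a then y ⟨a, h⟩ else 0) = ∑ s : Subtype p, y s := by
  calc ∑ a : α, (if h : p a then y ⟨a, h⟩ else 0)
      = ∑ a ∈ Finset.univ.filter p, (if h : p a then y ⟨a, h⟩ else 0) := by
        refine (Finset.sum_subset (Finset.filter_subset _ _) ?_).symm
        intro a _ ha
        rw [dif_neg (by simpa using ha)]
    _ = ∑ s : Subtype p, (if h : p s.1 then y ⟨s.1, h⟩ else 0) := by
        refine Finset.sum_subtype _ (fun x => ?_) _
        simp
    _ = ∑ s : Subtype p, y s := by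
        refine Finset.sum_congr rfl fun s _ => ?_
        rw [dif_pos s.2]

lemma coe_untop'_of_ne_top {x : WithTop ℚ} (hx : x ≠ ⊤) : x = ((x.untopD 0 : ℚ) : WithTop ℚ) := by
  cases x with
  | top => exact absurd rfl hx
  | coe q => rfl

/-- `wSum` as a coercion of a rational sum, when all relevant values are finite. -/
lemma wSum_coe {m q : ℕ} (ω : Op D m → ℚ) (ϱ : CostF D q) (xs : Fin m → Fin q → D)
    (hfeas : ∀ f : Op D m, ω f ≠ 0 → ϱ (appRows f xs) ≠ ⊤) :
    wSum ω ϱ xs = ((∑ f : Op D m, ω f * (ϱ (appRows f xs)).untopD 0 : ℚ) : WithTop ℚ) := by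
  unfold wSum
  rw [WithTop.coe_sum]
  rw [← Finset.sum_subset (Finset.filter_subset (fun f : Op D m => ω f ≠ 0) Finset.univ)]
  · refine Finset.sum_congr rfl fun f hf => ?_
    have hf' : ω f ≠ 0 := (Finset.mem_filter.mp hf).2
    have hne := hfeas f hf'
    rw [coe_untop'_of_ne_top hne]
    simp [qmul]
  · intro f _ hf
    have : ω f = 0 := by
      by_contra h
      exact hf (Finset.mem_filter.mpr ⟨Finset.mem_univ f, h⟩)
    simp [this]

end Main

end VCSPAux

namespace VCSPAux

section Cert

variable {D : Type} [Fintype D] [DecidableEq D]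

lemma cert (Γ : VLang D) (hfin : Γ.Finite) (m : ℕ) (g : Op D m)
    (hg : g ∈ Pol Γ m) (hng : g ∉ PolPlus Γ m) :
    ∃ lam : XT Γ hfin m → ℚ, (∀ ξ, 0 ≤ lam ξ) ∧ (∀ ξ, ¬ feasX ξ → lam ξ = 0) ∧
      ∃ cc : ℚ, (∀ i : Fin m, Sval lam (proj D i) = cc) ∧
        (∀ f ∈ Pol Γ m, cc ≤ Sval lam f) ∧ cc + 1 ≤ Sval lam g := by
  classical
  have hgnp : ¬ IsProj g := fun hp => hng (Or.inl hp)
  set A : ((Op D m ⊕ Bool) ⊕ XT Γ hfin m) → {f : Op D m // f ∈ Pol Γ m} → ℚ :=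
    Sum.elim
      (Sum.elim
        (fun f' h => if IsProj f' then 0 else if h.1 = f' then -1 else 0)
        (fun bb _ => if bb then (1:ℚ) else -1))
      (fun ξ h => if feasX ξ then aval h.1 ξ else 0) with hA
  set b : {f : Op D m // f ∈ Pol Γ m} → ℚ := fun h => if h.1 = g then 1 else 0 with hb
  rcases farkas Finset.univ A b with ⟨c, hc, hrep⟩ | ⟨y, hy, hby⟩
  · -- cone representation: extract the certificate
    set lam : XT Γ hfin m → ℚ :=
      fun ξ => if feasX ξ then c (Sum.inr ξ) else 0 with hlam
    set cconst : ℚ := c (Sum.inl (Sum.inr true)) - c (Sum.inl (Sum.inr false)) with hcconst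
    have hE : ∀ h : {f : Op D m // f ∈ Pol Γ m},
        (if h.1 = g then (1:ℚ) else 0)
        = (if IsProj h.1 then 0 else -c (Sum.inl (Sum.inl h.1)))
          + cconst + Sval lam h.1 := by
      intro h
      have h0 := congrFun hrep h
      rw [Finset.sum_apply] at h0
      simp only [Pi.smul_apply, smul_eq_mul] at h0
      rw [Fintype.sum_sum_type, Fintype.sum_sum_type, Fintype.sum_bool] at h0
      have hinl : ∑ f' : Op D m, c (Sum.inl (Sum.inl f')) * A (Sum.inl (Sum.inl f')) h
          = (if IsProj h.1 then 0 else -c (Sum.inl (Sum.inl h.1))) := by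
        rw [Finset.sum_eq_single h.1]
        · by_cases hp : IsProj h.1 <;> simp [hA, hp]
        · intro f' _ hne
          have hne' : h.1 ≠ f' := fun he => hne he.symm
          by_cases hp : IsProj f' <;> simp [hA, hp, hne']
        · intro habs; exact absurd (Finset.mem_univ _) habs
      have hxs : ∑ ξ : XT Γ hfin m, c (Sum.inr ξ) * A (Sum.inr ξ) h = Sval lam h.1 := by
        unfold Sval
        refine Finset.sum_congr rfl fun ξ _ => ?_
        by_cases hfe : feasX ξ <;> simp [hA, hlam, hfe]
      rw [hinl, hxs] at h0
      simp only [hA, hb, Sum.elim_inr, Sum.elim_inl, if_true, if_false, Bool.false_eq_true] at h0 ⊢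
      rw [h0, hcconst]
      ring
    refine ⟨lam, ?_, ?_, -cconst, ?_, ?_, ?_⟩
    · intro ξ
      by_cases hfe : feasX ξ <;> simp [hlam, hfe, hc _]
    · intro ξ hfe; simp [hlam, hfe]
    · intro i
      have h0 := hE ⟨proj D i, proj_mem_Pol Γ i⟩
      have hpg : (proj D i : Op D m) ≠ g := fun he => hng (by rw [← he]; exact proj_mem_PolPlus Γ i)
      rw [if_neg hpg, if_pos ⟨i, rfl⟩] at h0
      linarith [h0]
    · intro f hf
      have h0 := hE ⟨f, hf⟩
      by_cases hp : IsProj f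
      · rw [if_pos hp] at h0
        have hfg : f ≠ g := fun he => hng (he ▸ (Or.inl hp))
        rw [if_neg hfg] at h0
        linarith [h0]
      · rw [if_neg hp] at h0
        have hcnn := hc (Sum.inl (Sum.inl f))
        by_cases hfg : f = g
        · rw [if_pos hfg] at h0; linarith [h0]
        · rw [if_neg hfg] at h0; linarith [h0]
    · have h0 := hE ⟨g, hg⟩
      rw [if_pos rfl, if_neg hgnp] at h0
      have hcnn := hc (Sum.inl (Sum.inl g))
      linarith [h0]
  · -- separating weighting: contradiction with g ∉ PolPlus
    exfalso
    set ω : Op D m → ℚ := fun f => if hf : f ∈ Pol Γ m then y ⟨f, hf⟩ else 0 with hω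
    -- basic facts from the inequalities
    have hqd : ∀ j, qdot (A j) y ≤ 0 := fun j => hy j (Finset.mem_univ j)
    have hsum_le : ∑ h : {f : Op D m // f ∈ Pol Γ m}, y h ≤ 0 := by
      have := hqd (Sum.inl (Sum.inr true))
      unfold qdot at this
      simpa [hA] using this
    have hsum_ge : (0:ℚ) ≤ ∑ h : {f : Op D m // f ∈ Pol Γ m}, y h := by
      have := hqd (Sum.inl (Sum.inr false))
      unfold qdot at this
      have h2 : ∑ h : {f : Op D m // f ∈ Pol Γ m}, (-1) * y h ≤ 0 := by
        simpa [hA] using this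
      have h3 : ∑ h : {f : Op D m // f ∈ Pol Γ m}, (-1) * y h
          = -(∑ h : {f : Op D m // f ∈ Pol Γ m}, y h) := by
        rw [← Finset.sum_neg_distrib]
        refine Finset.sum_congr rfl fun h _ => ?_
        ring
      linarith [h2, h3]
    have hnonneg : ∀ (f : Op D m) (hf : f ∈ Pol Γ m), ¬ IsProj f → 0 ≤ y ⟨f, hf⟩ := by
      intro f hf hnp
      have := hqd (Sum.inl (Sum.inl f))
      unfold qdot at this
      have h2 : ∑ h : {f' : Op D m // f' ∈ Pol Γ m},
          (if h.1 = f then (-1:ℚ) else 0) * y h ≤ 0 := by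
        simpa [hA, hnp] using this
      rw [Finset.sum_eq_single (⟨f, hf⟩ : {f' : Op D m // f' ∈ Pol Γ m})] at h2
      · simpa using h2
      · intro h _ hne
        have hne' : h.1 ≠ f := fun he => hne (Subtype.ext he)
        simp [hne']
      · intro habs; exact absurd (Finset.mem_univ _) habs
    have hrow : ∀ ξ : XT Γ hfin m, feasX ξ →
        ∑ h : {f : Op D m // f ∈ Pol Γ m}, aval h.1 ξ * y h ≤ 0 := by
      intro ξ hfe
      have := hqd (Sum.inr ξ)
      unfold qdot at this
      simpa [hA, hfe] using this
    have hgpos : 0 < y ⟨g, hg⟩ := by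
      have h2 : qdot b y = y ⟨g, hg⟩ := by
        unfold qdot
        rw [Finset.sum_eq_single (⟨g, hg⟩ : {f : Op D m // f ∈ Pol Γ m})]
        · simp [hb]
        · intro h _ hne
          have hne' : h.1 ≠ g := fun he => hne (Subtype.ext he)
          simp [hb, hne']
        · intro habs; exact absurd (Finset.mem_univ _) habs
      rw [h2] at hby; exact hby
    -- ω is a weighted polymorphism with positive weight on g
    have hωg : 0 < ω g := by
      have h4 : ω g = y ⟨g, hg⟩ := by simp only [hω]; rw [dif_pos hg]
      rw [h4]; exact hgpos
    have hsupp : ∀ f : Op D m, ω f ≠ 0 → f ∈ Pol Γ m := by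
      intro f hne
      by_contra hnf
      simp only [hω] at hne; rw [dif_neg hnf] at hne; exact hne rfl
    have hsum0 : ∑ f : Op D m, ω f = 0 := by
      simp only [hω]
      rw [sum_extend_zero (fun f => f ∈ Pol Γ m) (fun h => y h)]
      linarith
    have hnegproj : ∀ f : Op D m, ω f < 0 → IsProj f := by
      intro f hlt
      by_contra hnp
      by_cases hf : f ∈ Pol Γ m
      · have := hnonneg f hf hnp
        simp only [hω] at hlt; rw [dif_pos hf] at hlt; linarith
      · simp only [hω] at hlt; rw [dif_neg hf] at hlt; exact absurd hlt (by norm_num)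
    have hmem : ω ∈ wPol Γ m := by
      refine ⟨⟨hsupp, hsum0, hnegproj⟩, ?_⟩
      intro p hp xs hxs
      have hfeas' : ∀ f : Op D m, ω f ≠ 0 → p.2 (appRows f xs) ≠ ⊤ := by
        intro f hne
        exact (hsupp f hne) p hp xs hxs
      rw [wSum_coe ω p.2 xs hfeas']
      set ξp : XT Γ hfin m := ⟨⟨p, (Set.Finite.mem_toFinset hfin).mpr hp⟩, xs⟩ with hξp
      have hfe : feasX ξp := hxs
      have hstep : ∀ f : Op D m, ω f * (p.2 (appRows f xs)).untopD 0
          = (if hf : f ∈ Pol Γ m then y ⟨f, hf⟩ * aval f ξp else 0) := by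
        intro f
        by_cases hf : f ∈ Pol Γ m
        · simp only [hω, dif_pos hf]; rfl
        · simp only [hω, dif_neg hf, zero_mul]
      have hfinal : (∑ f : Op D m, ω f * (p.2 (appRows f xs)).untopD 0) ≤ 0 := by
        rw [Finset.sum_congr rfl (fun f _ => hstep f)]
        rw [sum_extend_zero (fun f => f ∈ Pol Γ m) (fun h => y h * aval h.1 ξp)]
        calc ∑ h : {f : Op D m // f ∈ Pol Γ m}, y h * aval h.1 ξp
            = ∑ h : {f : Op D m // f ∈ Pol Γ m}, aval h.1 ξp * y h := by
              refine Finset.sum_congr rfl fun h _ => ?_; ring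
          _ ≤ 0 := hrow ξp hfe
      exact_mod_cast hfinal
    exact hng (Or.inr ⟨ω, hmem, hωg⟩)

end Cert

end VCSPAux

namespace VCSPAux

section Key

variable {D : Type} [Fintype D] [DecidableEq D]

lemma key (Γ : VLang D) (hfin : Γ.Finite) (m : ℕ) (hm : 0 < m) :
    ∃ lam : XT Γ hfin m → ℚ, (∀ ξ, 0 ≤ lam ξ) ∧ (∀ ξ, ¬ feasX ξ → lam ξ = 0) ∧
      (∀ i : Fin m, Sval lam (proj D i) = Pval lam) ∧
      (∀ f ∈ Pol Γ m, Pval lam ≤ Sval lam f) ∧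
      (∀ f ∈ Pol Γ m, Sval lam f = Pval lam → f ∈ PolPlus Γ m) := by
  classical
  set B : Finset (Op D m) :=
    Finset.univ.filter (fun f => f ∈ Pol Γ m ∧ f ∉ PolPlus Γ m) with hB
  have hex : ∀ g : {g' : Op D m // g' ∈ B}, ∃ lamg : XT Γ hfin m → ℚ,
      (∀ ξ, 0 ≤ lamg ξ) ∧ (∀ ξ, ¬ feasX ξ → lamg ξ = 0) ∧
      ∃ cc : ℚ, (∀ i : Fin m, Sval lamg (proj D i) = cc) ∧
        (∀ f ∈ Pol Γ m, cc ≤ Sval lamg f) ∧ cc + 1 ≤ Sval lamg g.1 := by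
    intro g
    have h1 := (Finset.mem_filter.mp g.2).2
    exact cert Γ hfin m g.1 h1.1 h1.2
  choose pick hp1 hp2 cc hp3 hp4 hp5 using hex
  set lam : XT Γ hfin m → ℚ := fun ξ => ∑ g : {g' : Op D m // g' ∈ B}, pick g ξ with hlam
  have hSlin : ∀ f : Op D m,
      Sval lam f = ∑ g : {g' : Op D m // g' ∈ B}, Sval (pick g) f := by
    intro f
    unfold Sval
    calc ∑ ξ : XT Γ hfin m, lam ξ * aval f ξ
        = ∑ ξ : XT Γ hfin m, ∑ g : {g' : Op D m // g' ∈ B}, pick g ξ * aval f ξ := by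
          refine Finset.sum_congr rfl fun ξ _ => ?_
          simp only [hlam]
          rw [Finset.sum_mul]
      _ = ∑ g : {g' : Op D m // g' ∈ B}, ∑ ξ : XT Γ hfin m, pick g ξ * aval f ξ :=
          Finset.sum_comm
  set CC : ℚ := ∑ g : {g' : Op D m // g' ∈ B}, cc g with hCC
  have hprojCC : ∀ i : Fin m, Sval lam (proj D i) = CC := by
    intro i
    rw [hSlin, hCC]
    exact Finset.sum_congr rfl fun g _ => hp3 g i
  have hPCC : Pval lam = CC := by
    rw [Pval_swap lam]
    have h1 : ∑ i : Fin m, Sval lam (proj D i) = (m : ℚ) * CC := by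
      rw [Finset.sum_congr rfl fun i _ => hprojCC i]
      simp [Finset.sum_const, Finset.card_univ, mul_comm]
    rw [h1]
    have hm0 : (m : ℚ) ≠ 0 := Nat.cast_ne_zero.mpr hm.ne'
    field_simp
  refine ⟨lam, ?_, ?_, ?_, ?_, ?_⟩
  · intro ξ
    simp only [hlam]
    exact Finset.sum_nonneg fun g _ => hp1 g ξ
  · intro ξ hfe
    simp only [hlam]
    exact Finset.sum_eq_zero fun g _ => hp2 g ξ hfe
  · intro i; rw [hprojCC i, hPCC]
  · intro f hf
    rw [hPCC, hSlin, hCC]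
    exact Finset.sum_le_sum fun g _ => hp4 g f hf
  · intro f hf heq
    by_contra hnplus
    have hfB : f ∈ B := Finset.mem_filter.mpr ⟨Finset.mem_univ _, hf, hnplus⟩
    rw [hPCC, hSlin, hCC] at heq
    have hle : ∀ g ∈ (Finset.univ : Finset {g' : Op D m // g' ∈ B}),
        cc g ≤ Sval (pick g) f := fun g _ => hp4 g f hf
    have hall := (Finset.sum_eq_sum_iff_of_le hle).mp heq.symm
    have h5 := hp5 ⟨f, hfB⟩
    have h6 := hall ⟨f, hfB⟩ (Finset.mem_univ _)
    linarith
end Key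

end VCSPAux


open VCSPAux

/-- For a finite core language `Γ` and a relation `R` compatible with every
operation of `Pol⁺(Γ)`, there is a cost function `ϱ_R ∈ wRelClo(Γ)` and a rational `P` with
`ϱ_R ≥ P` everywhere and `ϱ_R(x) = P` iff `x ∈ R`. -/
theorem exists_costF_of_compatible_relation {D : Type} [Fintype D] [DecidableEq D] [Nonempty D]
    (Γ : VLang D) (hfin : Γ.Finite) (hcore : IsCore Γ)
    (r : ℕ) (R : Set (Fin r → D))
    (hR : ∀ (k : ℕ), ∀ f ∈ PolPlus Γ k, ∀ xs : Fin k → Fin r → D,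
      (∀ i, xs i ∈ R) → appRows f xs ∈ R) :
    ∃ (ϱ : CostF D r) (P : ℚ), (⟨r, ϱ⟩ : Σ r : ℕ, CostF D r) ∈ wRelClo Γ ∧
      ∀ x : Fin r → D, (P : WithTop ℚ) ≤ ϱ x ∧ (ϱ x = (P : WithTop ℚ) ↔ x ∈ R) := by

  classical
  rcases Set.eq_empty_or_nonempty R with hRe | ⟨x₀, hx₀⟩
  · -- R is empty: a constant cost function works
    refine ⟨fun _ => (0 : WithTop ℚ), -1, ?_, ?_⟩
    · intro Δ hΔ
      obtain ⟨hsub, hclo⟩ := hΔ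
      refine hclo.1 r _ ?_
      refine ⟨r, ⟨0, fun cst hcst => absurd hcst (Multiset.notMem_zero cst)⟩,
        fun i => i, ?_⟩
      intro x
      have hne : (Finset.univ.filter
          fun s : Fin r → D => ∀ i : Fin r, s ((fun i => i) i) = x i).Nonempty :=
        ⟨x, Finset.mem_filter.mpr ⟨Finset.mem_univ _, fun i => rfl⟩⟩
      have h1 : ∀ s ∈ (Finset.univ.filter
          fun s : Fin r → D => ∀ i : Fin r, s ((fun i => i) i) = x i),
          (VInstance.cost (D := D) (Γ := Δ)
            ⟨0, fun cst hcst => absurd hcst (Multiset.notMem_zero cst)⟩ s)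
            = (0 : WithTop ℚ) := by
        intro s _
        simp [VInstance.cost]
      rw [Finset.inf_congr rfl h1, Finset.inf_const hne]
    · intro x
      refine ⟨?_, ?_, ?_⟩
      · show ((-1:ℚ) : WithTop ℚ) ≤ (0 : WithTop ℚ)
        exact_mod_cast (by norm_num : (-1:ℚ) ≤ (0:ℚ))
      · intro h0
        exfalso
        have h0' : (0 : WithTop ℚ) = ((-1:ℚ) : WithTop ℚ) := h0
        have : (0:ℚ) = -1 := by exact_mod_cast h0'
        norm_num at this
      · intro hx
        rw [hRe] at hx
        exact absurd hx (Set.notMem_empty x)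
  · -- R nonempty: the main construction
    have hRfin : R.Finite := Set.toFinite R
    set Rfin : Finset (Fin r → D) := hRfin.toFinset with hRfin'
    set m : ℕ := Rfin.card with hmdef
    have hm : 0 < m := Finset.card_pos.mpr ⟨x₀, (Set.Finite.mem_toFinset hRfin).mpr hx₀⟩
    set t : Fin m → (Fin r → D) := fun l => (Rfin.equivFin.symm l).1 with ht
    have htR : ∀ l, t l ∈ R := fun l =>
      (Set.Finite.mem_toFinset hRfin).mp (Rfin.equivFin.symm l).2
    have htsurj : ∀ x ∈ R, ∃ l, t l = x := by
      intro x hx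
      refine ⟨Rfin.equivFin ⟨x, (Set.Finite.mem_toFinset hRfin).mpr hx⟩, ?_⟩
      simp [ht]
    obtain ⟨lam, hlam0, hlamsupp, hproj, hge, htie⟩ := key Γ hfin m hm
    set nV : ℕ := Fintype.card (Fin m → D) with hnV
    set e : (Fin m → D) ≃ Fin nV := Fintype.equivFin _ with he
    set XF : Finset (XT Γ hfin m) := Finset.univ.filter feasX with hXF
    set cons : Multiset (Σ q : ℕ, (Fin q → Fin nV) × CostF D q) :=
      (XF.val.map fun ξ =>
        ⟨ξ.1.1.1, (fun j => e fun i => ξ.2 i j, fun yv => qmul (lam ξ) (ξ.1.1.2 yv))⟩)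
      + (XF.val.map fun ξ =>
        ⟨ξ.1.1.1, (fun j => e fun i => ξ.2 i j, fun yv => qmul 0 (ξ.1.1.2 yv))⟩) with hcons
    set mycost : (Fin nV → D) → WithTop ℚ :=
      fun s => ((cons.map fun cst => cst.2.2 fun i => s (cst.2.1 i)).sum) with hmycost
    set v : Fin r → Fin nV := fun j => e fun i => t i j with hv
    set ϱR : CostF D r := fun x =>
      (Finset.univ.filter fun s : Fin nV → D => ∀ i, s (v i) = x i).inf mycost with hϱR
    set P : ℚ := Pval lam with hP
    -- cost expansion
    have hcost : ∀ s : Fin nV → D,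
        mycost s = (∑ ξ ∈ XF, qmul (lam ξ) (ξ.1.1.2 (appRows (fun z => s (e z)) ξ.2)))
          + ∑ ξ ∈ XF, qmul 0 (ξ.1.1.2 (appRows (fun z => s (e z)) ξ.2)) := by
      intro s
      simp only [hmycost, hcons]
      rw [Multiset.map_add, Multiset.sum_add, Multiset.map_map, Multiset.map_map]
      rfl
    have hPol_cost : ∀ s : Fin nV → D, (fun z => s (e z)) ∈ Pol Γ m →
        mycost s = ((Sval lam (fun z => s (e z)) : ℚ) : WithTop ℚ) := by
      intro s hsPol
      rw [hcost s]
      have hval : ∀ ξ ∈ XF, ξ.1.1.2 (appRows (fun z => s (e z)) ξ.2)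
          = ((aval (fun z => s (e z)) ξ : ℚ) : WithTop ℚ) := by
        intro ξ hξ
        have hfe : feasX ξ := (Finset.mem_filter.mp hξ).2
        have hmem : ξ.1.1 ∈ Γ := (Set.Finite.mem_toFinset hfin).mp ξ.1.2
        have hfeas := hsPol ξ.1.1 hmem ξ.2 hfe
        exact coe_untop'_of_ne_top hfeas
      have h1 : ∑ ξ ∈ XF, qmul (lam ξ) (ξ.1.1.2 (appRows (fun z => s (e z)) ξ.2))
          = ((∑ ξ ∈ XF, lam ξ * aval (fun z => s (e z)) ξ : ℚ) : WithTop ℚ) := by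
        rw [WithTop.coe_sum]
        refine Finset.sum_congr rfl fun ξ hξ => ?_
        rw [hval ξ hξ]
        simp [qmul]
      have h2 : ∑ ξ ∈ XF, qmul 0 (ξ.1.1.2 (appRows (fun z => s (e z)) ξ.2))
          = (0 : WithTop ℚ) := by
        refine Finset.sum_eq_zero fun ξ hξ => ?_
        rw [hval ξ hξ]
        simp [qmul]
      rw [h1, h2, add_zero]
      congr 1
      unfold Sval
      refine Finset.sum_subset (Finset.subset_univ _) ?_
      intro ξ _ hnot
      have hnfe : ¬ feasX ξ := by
        intro hfe
        exact hnot (by simp [hXF, hfe])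
      rw [hlamsupp ξ hnfe, zero_mul]
    have hNPol_cost : ∀ s : Fin nV → D, (fun z => s (e z)) ∉ Pol Γ m → mycost s = ⊤ := by
      intro s hsn
      rw [hcost s]
      have hwit : ∃ p ∈ Γ, ∃ xs : Fin m → Fin p.1 → D,
          (∀ i, xs i ∈ Feas p.2) ∧ p.2 (appRows (fun z => s (e z)) xs) = ⊤ := by
        by_contra hcon
        push_neg at hcon
        apply hsn
        intro p hp xs hxs
        exact hcon p hp xs hxs
      obtain ⟨p, hp, xs, hxs, htop⟩ := hwit
      have h2 : ∑ ξ ∈ XF, qmul 0 (ξ.1.1.2 (appRows (fun z => s (e z)) ξ.2))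
          = (⊤ : WithTop ℚ) := by
        rw [WithTop.sum_eq_top]
        refine ⟨⟨⟨p, (Set.Finite.mem_toFinset hfin).mpr hp⟩, xs⟩,
          Finset.mem_filter.mpr ⟨Finset.mem_univ _, hxs⟩, ?_⟩
        show qmul 0 (p.2 (appRows (fun z => s (e z)) xs)) = ⊤
        rw [htop]
        rfl
      rw [h2]
      exact add_top _
    have hlb : ∀ s : Fin nV → D, ((P : ℚ) : WithTop ℚ) ≤ mycost s := by
      intro s
      by_cases hsp : (fun z => s (e z)) ∈ Pol Γ m
      · rw [hPol_cost s hsp]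
        exact_mod_cast hge _ hsp
      · rw [hNPol_cost s hsp]
        exact le_top
    have hprojcost : ∀ l : Fin m,
        mycost (fun idx => (e.symm idx) l) = ((P : ℚ) : WithTop ℚ) := by
      intro l
      have hfeq : (fun z => (fun idx => (e.symm idx) l) (e z)) = proj D l := by
        funext z
        show (e.symm (e z)) l = z l
        rw [Equiv.symm_apply_apply]
      have h1 := hPol_cost (fun idx => (e.symm idx) l)
        (by rw [hfeq]; exact proj_mem_Pol Γ l)
      rw [hfeq] at h1
      rw [h1, hproj l, hP]
    -- main pointwise facts
    have hmain : ∀ x : Fin r → D,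
        ((P : ℚ) : WithTop ℚ) ≤ ϱR x ∧ (ϱR x = ((P : ℚ) : WithTop ℚ) ↔ x ∈ R) := by
      intro x
      have hlow : ((P : ℚ) : WithTop ℚ) ≤ ϱR x := by
        simp only [hϱR]
        exact Finset.le_inf fun s _ => hlb s
      refine ⟨hlow, ?_, ?_⟩
      · intro hxP
        simp only [hϱR] at hxP
        have hne : (Finset.univ.filter
            fun s : Fin nV → D => ∀ i, s (v i) = x i).Nonempty := by
          by_contra hempty
          rw [Finset.not_nonempty_iff_eq_empty] at hempty
          rw [hempty, Finset.inf_empty] at hxP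
          exact WithTop.coe_ne_top hxP.symm
        obtain ⟨s₀, hs₀mem, hs₀val⟩ := Finset.exists_mem_eq_inf _ hne mycost
        rw [hs₀val] at hxP
        have hf₀Pol : (fun z => s₀ (e z)) ∈ Pol Γ m := by
          by_contra hn
          rw [hNPol_cost s₀ hn] at hxP
          exact WithTop.coe_ne_top hxP.symm
        have hSv : Sval lam (fun z => s₀ (e z)) = P := by
          have h3 := hPol_cost s₀ hf₀Pol
          rw [hxP] at h3
          exact_mod_cast h3.symm
        have hf₀plus : (fun z => s₀ (e z)) ∈ PolPlus Γ m := htie _ hf₀Pol hSv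
        have himg : appRows (fun z => s₀ (e z)) t ∈ R :=
          hR m _ hf₀plus t (fun i => htR i)
        have hxeq : appRows (fun z => s₀ (e z)) t = x := by
          funext j
          exact (Finset.mem_filter.mp hs₀mem).2 j
        rw [← hxeq]
        exact himg
      · intro hxR
        obtain ⟨l, hl⟩ := htsurj x hxR
        refine le_antisymm ?_ hlow
        have hmem : (fun idx => (e.symm idx) l) ∈ (Finset.univ.filter
            fun s : Fin nV → D => ∀ i, s (v i) = x i) := by
          refine Finset.mem_filter.mpr ⟨Finset.mem_univ _, fun j => ?_⟩
          show (e.symm (v j)) l = x j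
          calc (e.symm (v j)) l = (fun i => t i j) l := by
                simp only [hv]
                rw [Equiv.symm_apply_apply]
            _ = x j := congrFun hl j
        calc ϱR x ≤ mycost (fun idx => (e.symm idx) l) := by
              simp only [hϱR]
              exact Finset.inf_le hmem
          _ = ((P : ℚ) : WithTop ℚ) := hprojcost l
    -- membership in the weighted relational clone
    have hmemclo : (⟨r, ϱR⟩ : Σ r : ℕ, CostF D r) ∈ wRelClo Γ := by
      refine Set.mem_sInter.mpr fun Δ hΔ => ?_
      obtain ⟨hsub, hclo⟩ := hΔ
      refine hclo.1 r ϱR ⟨nV, ⟨cons, ?_⟩, v, fun x => rfl⟩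
      intro cst hcst
      simp only [hcons] at hcst
      rw [Multiset.mem_add] at hcst
      rcases hcst with hc1 | hc2
      · obtain ⟨ξ, _, hξeq⟩ := Multiset.mem_map.mp hc1
        rw [← hξeq]
        have hΓ : (⟨ξ.1.1.1, ξ.1.1.2⟩ : Σ q : ℕ, CostF D q) ∈ Δ := by
          rw [Sigma.eta]
          exact hsub ((Set.Finite.mem_toFinset hfin).mp ξ.1.2)
        exact hclo.2.1 ξ.1.1.1 ξ.1.1.2 (lam ξ) (hlam0 ξ) hΓ
      · obtain ⟨ξ, _, hξeq⟩ := Multiset.mem_map.mp hc2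
        rw [← hξeq]
        have hΓ : (⟨ξ.1.1.1, ξ.1.1.2⟩ : Σ q : ℕ, CostF D q) ∈ Δ := by
          rw [Sigma.eta]
          exact hsub ((Set.Finite.mem_toFinset hfin).mp ξ.1.2)
        exact hclo.2.1 ξ.1.1.1 ξ.1.1.2 0 le_rfl hΓ
    exact ⟨ϱR, P, hmemclo, hmain⟩
end
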